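/- arXiv:1702.01502 — 12 statements merged into one kernel-verified Lean document; each statement's English description precedes it below -/
import Mathlib

section
/- Feshbach projection method, part (i): with H, P, P⊥, T, S and the Feshbach map F as in the context, the operator T is bijective (invertible as a bounded operator on H) if and only if there exists a bounded operator G : H →L[ℂ] H with G = P ∘ G ∘ P, G ∘ F = P and F ∘ G = P (i.e., F is invertible on the range of P). Moreover, if T is bijective with bounded inverse T⁻¹, then the operator G = P ∘ T⁻¹ ∘ P satisfies G ∘ F = P and F ∘ G = P. -/
/-- **Feshbach projection method, part (i).**
`H` is a complex Hilbert space, `P` an orthogonal projection (bounded self-adjoint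
idempotent), `P⊥ = 1 - P`, `T` a bounded self-adjoint operator, and `S` a bounded
operator with `S = P⊥ ∘ S ∘ P⊥` which is a two-sided inverse of `P⊥ ∘ T ∘ P⊥` on the
range of `P⊥`.  With the Feshbach map
`F = P ∘ T ∘ P − P ∘ T ∘ P⊥ ∘ S ∘ P⊥ ∘ T ∘ P`, the operator `T` is bijective iff `F`
is invertible on the range of `P`, i.e. iff there is a bounded operator `G` with
`G = P ∘ G ∘ P`, `G ∘ F = P` and `F ∘ G = P`.  Moreover, if `T` is bijective with
bounded inverse `T⁻¹`, then `G = P ∘ T⁻¹ ∘ P` is such an inverse of `F`. -/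
theorem feshbach_part_i
    {H : Type*} [NormedAddCommGroup H] [InnerProductSpace ℂ H] [CompleteSpace H]
    (P T S : H →L[ℂ] H)
    (hP : IsSelfAdjoint P) (hP2 : P ∘L P = P)
    (hT : IsSelfAdjoint T)
    (hS : S = (1 - P) ∘L S ∘L (1 - P))
    (hS1 : S ∘L ((1 - P) ∘L T ∘L (1 - P)) = 1 - P)
    (hS2 : ((1 - P) ∘L T ∘L (1 - P)) ∘L S = 1 - P)
    (F : H →L[ℂ] H)
    (hF : F = P ∘L T ∘L P - P ∘L T ∘L (1 - P) ∘L S ∘L (1 - P) ∘L T ∘L P) :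
    (Function.Bijective T ↔
      ∃ G : H →L[ℂ] H, G = P ∘L G ∘L P ∧ G ∘L F = P ∧ F ∘L G = P) ∧
    (∀ T' : H →L[ℂ] H, T' ∘L T = 1 → T ∘L T' = 1 →
      (P ∘L T' ∘L P) ∘L F = P ∧ F ∘L (P ∘L T' ∘L P) = P) := by
  simp only [← ContinuousLinearMap.mul_def] at hP2 hS hS1 hS2 hF ⊢
  -- left-associated restatements
  have hSa : S = (1 - P) * S * (1 - P) := by
    conv_lhs => rw [hS]
    noncomm_ring
  have hS1a : S * ((1 - P) * T * (1 - P)) = 1 - P := by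
    conv_rhs => rw [← hS1]
    noncomm_ring
  have hS2a : ((1 - P) * T * (1 - P)) * S = 1 - P := by
    conv_rhs => rw [← hS2]
    noncomm_ring
  have hFa : F = P * T * P - P * T * (1 - P) * S * (1 - P) * T * P := by
    conv_lhs => rw [hF]
    noncomm_ring
  clear hS hS1 hS2 hF
  -- basic consequences
  have hps : P * S = 0 := by
    calc P * S = P * ((1 - P) * S * (1 - P)) := by rw [← hSa]
    _ = (P - P * P) * (S * (1 - P)) := by noncomm_ring
    _ = (P - P) * (S * (1 - P)) := by rw [hP2]
    _ = 0 := by rw [sub_self, zero_mul]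
  have hsp : S * P = 0 := by
    calc S * P = ((1 - P) * S * (1 - P)) * P := by rw [← hSa]
    _ = ((1 - P) * S) * (P - P * P) := by noncomm_ring
    _ = ((1 - P) * S) * (P - P) := by rw [hP2]
    _ = 0 := by rw [sub_self, mul_zero]
  have hqts : (1 - P) * T * S = 1 - P := by
    calc (1 - P) * T * S
        = ((1 - P) * T * (1 - P)) * S + (1 - P) * T * (P * S) := by noncomm_ring
    _ = ((1 - P) * T * (1 - P)) * S + (1 - P) * T * 0 := by rw [hps]
    _ = ((1 - P) * T * (1 - P)) * S := by rw [mul_zero, add_zero]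
    _ = 1 - P := hS2a
  have hstq : S * T * (1 - P) = 1 - P := by
    calc S * T * (1 - P)
        = S * ((1 - P) * T * (1 - P)) + (S * P) * (T * (1 - P)) := by noncomm_ring
    _ = S * ((1 - P) * T * (1 - P)) + 0 * (T * (1 - P)) := by rw [hsp]
    _ = S * ((1 - P) * T * (1 - P)) := by rw [zero_mul, add_zero]
    _ = 1 - P := hS1a
  have hf' : F = P * T * P - P * T * S * T * P := by
    rw [hFa]
    have h : P * T * (1 - P) * S * (1 - P) * T * P
        = P * T * ((1 - P) * S * (1 - P)) * T * P := by noncomm_ring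
    rw [h, ← hSa]
  have hts : T * S = P * T * S + (1 - P) := by
    conv_rhs => rw [← hqts]
    noncomm_ring
  have hst : S * T = S * T * P + (1 - P) := by
    conv_rhs => rw [← hstq]
    noncomm_ring
  have htv : T * (P - S * T * P) = F := by
    calc T * (P - S * T * P)
        = T * P - (T * S) * (T * P) := by noncomm_ring
    _ = T * P - (P * T * S + (1 - P)) * (T * P) := by rw [hts]
    _ = P * T * P - P * T * S * T * P := by noncomm_ring
    _ = F := hf'.symm
  have hut : (P - P * T * S) * T = F := by
    calc (P - P * T * S) * T
        = P * T - (P * T) * (S * T) := by noncomm_ring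
    _ = P * T - (P * T) * (S * T * P + (1 - P)) := by conv_lhs => rw [hst]
    _ = P * T * P - P * T * S * T * P := by noncomm_ring
    _ = F := hf'.symm
  have hpf : P * F = F := by
    rw [hf']
    calc P * (P * T * P - P * T * S * T * P)
        = (P * P) * (T * P) - (P * P) * (T * S * T * P) := by noncomm_ring
    _ = P * (T * P) - P * (T * S * T * P) := by rw [hP2]
    _ = P * T * P - P * T * S * T * P := by noncomm_ring
  have hfp : F * P = F := by
    rw [hf']
    calc (P * T * P - P * T * S * T * P) * P
        = (P * T) * (P * P) - (P * T * S * T) * (P * P) := by noncomm_ring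
    _ = (P * T) * P - (P * T * S * T) * P := by rw [hP2]
    _ = P * T * P - P * T * S * T * P := by noncomm_ring
  -- the "moreover" statement
  have key : ∀ T' : H →L[ℂ] H, T' * T = 1 → T * T' = 1 →
      (P * T' * P) * F = P ∧ F * (P * T' * P) = P := by
    intro T' h1 h2
    constructor
    · calc (P * T' * P) * F = (P * T') * (P * F) := by noncomm_ring
      _ = (P * T') * (T * (P - S * T * P)) := by rw [hpf, htv]
      _ = P * ((T' * T) * (P - S * T * P)) := by noncomm_ring
      _ = P * (1 * (P - S * T * P)) := by rw [h1]
      _ = P * P - (P * S) * (T * P) := by noncomm_ring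
      _ = P * P - 0 * (T * P) := by rw [hps]
      _ = P * P := by rw [zero_mul, sub_zero]
      _ = P := hP2
    · calc F * (P * T' * P) = (F * P) * (T' * P) := by noncomm_ring
      _ = ((P - P * T * S) * T) * (T' * P) := by rw [hfp, hut]
      _ = ((P - P * T * S) * (T * T')) * P := by noncomm_ring
      _ = ((P - P * T * S) * 1) * P := by rw [h2]
      _ = P * P - (P * T) * (S * P) := by noncomm_ring
      _ = P * P - (P * T) * 0 := by rw [hsp]
      _ = P * P := by rw [mul_zero, sub_zero]
      _ = P := hP2
  refine ⟨⟨?_, ?_⟩, key⟩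
  · -- T bijective → ∃ G
    intro hbij
    have hker := (LinearMap.ker_eq_bot (f := (T : H →ₗ[ℂ] H))).mpr hbij.1
    have hrange := LinearMap.range_eq_top.mpr hbij.2
    let e := ContinuousLinearEquiv.ofBijective T hker hrange
    have hcoeL : (e : H →L[ℂ] H) = T :=
      ContinuousLinearEquiv.coe_ofBijective T hker hrange
    have h1 : (e.symm : H →L[ℂ] H) * T = 1 := by
      rw [← hcoeL]; ext x
      simp [ContinuousLinearMap.mul_apply]
    have h2 : T * (e.symm : H →L[ℂ] H) = 1 := by
      rw [← hcoeL]; ext x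
      simp [ContinuousLinearMap.mul_apply]
    obtain ⟨k1, k2⟩ := key _ h1 h2
    refine ⟨P * (e.symm : H →L[ℂ] H) * P, ?_, k1, k2⟩
    conv_lhs => rw [← hP2]
    noncomm_ring
  · -- ∃ G → T bijective
    rintro ⟨G, hG, hGF, hFG⟩
    set T'' : H →L[ℂ] H := (P - S * T * P) * G * (P - P * T * S) + S with hT''
    have h2 : T * T'' = 1 := by
      calc T * T''
          = (T * (P - S * T * P)) * (G * (P - P * T * S)) + T * S := by
            rw [hT'']; noncomm_ring
      _ = F * (G * (P - P * T * S)) + T * S := by rw [htv]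
      _ = (F * G) * (P - P * T * S) + T * S := by noncomm_ring
      _ = P * (P - P * T * S) + T * S := by rw [hFG]
      _ = (P * P - (P * P) * (T * S)) + T * S := by noncomm_ring
      _ = (P - P * (T * S)) + T * S := by rw [hP2]
      _ = P + (1 - P) * T * S := by noncomm_ring
      _ = P + (1 - P) := by rw [hqts]
      _ = 1 := by noncomm_ring
    have h1 : T'' * T = 1 := by
      calc T'' * T
          = ((P - S * T * P) * G) * ((P - P * T * S) * T) + S * T := by
            rw [hT'']; noncomm_ring
      _ = ((P - S * T * P) * G) * F + S * T := by rw [hut]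
      _ = (P - S * T * P) * (G * F) + S * T := by noncomm_ring
      _ = (P - S * T * P) * P + S * T := by rw [hGF]
      _ = (P * P - S * T * (P * P)) + S * T := by noncomm_ring
      _ = (P - S * T * P) + S * T := by rw [hP2]
      _ = P + S * T * (1 - P) := by noncomm_ring
      _ = P + (1 - P) := by rw [hstq]
      _ = 1 := by noncomm_ring
    constructor
    · intro x y hxy
      have h : T'' (T x) = T'' (T y) := by rw [hxy]
      simpa only [← ContinuousLinearMap.mul_apply, h1, ContinuousLinearMap.one_apply]
        using h
    · intro y
      refine ⟨T'' y, ?_⟩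
      have h := congrArg (fun A : H →L[ℂ] H => A y) h2
      simpa only [ContinuousLinearMap.mul_apply, ContinuousLinearMap.one_apply] using h
end

section
/- Feshbach projection method, part (ii): with H, P, P⊥, T, S and the Feshbach map F as in the context, if ψ ∈ H satisfies ψ ≠ 0 and T ψ = 0, then P ψ ≠ 0 and F (P ψ) = 0. -/
/-- **Feshbach projection method, part (ii).**
With `H`, `P`, `P⊥ = 1 - P`, `T`, `S` and the Feshbach map
`F = P ∘ T ∘ P − P ∘ T ∘ P⊥ ∘ S ∘ P⊥ ∘ T ∘ P` as in the context:
if `ψ ≠ 0` and `T ψ = 0`, then `P ψ ≠ 0` and `F (P ψ) = 0`. -/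
theorem feshbach_part_ii
    {H : Type*} [NormedAddCommGroup H] [InnerProductSpace ℂ H] [CompleteSpace H]
    (P T S : H →L[ℂ] H)
    (hP : IsSelfAdjoint P) (hP2 : P ∘L P = P)
    (hT : IsSelfAdjoint T)
    (hS : S = (1 - P) ∘L S ∘L (1 - P))
    (hS1 : S ∘L ((1 - P) ∘L T ∘L (1 - P)) = 1 - P)
    (hS2 : ((1 - P) ∘L T ∘L (1 - P)) ∘L S = 1 - P)
    (F : H →L[ℂ] H)
    (hF : F = P ∘L T ∘L P - P ∘L T ∘L (1 - P) ∘L S ∘L (1 - P) ∘L T ∘L P)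
    (ψ : H) (hψ : ψ ≠ 0) (hTψ : T ψ = 0) :
    P ψ ≠ 0 ∧ F (P ψ) = 0 := by
  have hPP : ∀ x, P (P x) = P x := fun x => by
    have := ContinuousLinearMap.ext_iff.mp hP2 x
    simpa using this
  have key : S ((1 - P) (T ((1 - P) ψ))) = (1 - P) ψ := by
    have := ContinuousLinearMap.ext_iff.mp hS1 ψ
    simpa only [ContinuousLinearMap.comp_apply] using this
  have hPψ : P ψ ≠ 0 := by
    intro h
    have h1 : (1 - P) ψ = ψ := by
      simp [ContinuousLinearMap.sub_apply, h]
    rw [h1, hTψ, map_zero, map_zero] at key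
    exact hψ key.symm
  refine ⟨hPψ, ?_⟩
  have hTP : T (P ψ) = - T ((1 - P) ψ) := by
    simp [ContinuousLinearMap.sub_apply, map_sub, hTψ]
  rw [hF, ContinuousLinearMap.sub_apply]
  simp only [ContinuousLinearMap.comp_apply]
  have hQQ : (1 - P) ((1 - P) ψ) = (1 - P) ψ := by
    simp [ContinuousLinearMap.sub_apply, map_sub, hPP]
  rw [hPP, hTP]
  simp only [map_neg]
  rw [key, hQQ]
  simp
end

section
/- Feshbach projection method, part (iii): with H, P, P⊥, T, S and the Feshbach map F as in the context, if φ ∈ H satisfies φ ≠ 0, P φ = φ and F φ = 0, then the vector ψ = φ − S (T φ) satisfies ψ ≠ 0 and T ψ = 0. -/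
/-- **Feshbach projection method, part (iii).**
With `H`, `P`, `P⊥ = 1 - P`, `T`, `S` and the Feshbach map
`F = P ∘ T ∘ P − P ∘ T ∘ P⊥ ∘ S ∘ P⊥ ∘ T ∘ P` as in the context:
if `φ ≠ 0`, `P φ = φ` and `F φ = 0`, then `ψ = φ - S (T φ)` satisfies
`ψ ≠ 0` and `T ψ = 0`. -/
theorem feshbach_part_iii
    {H : Type*} [NormedAddCommGroup H] [InnerProductSpace ℂ H] [CompleteSpace H]
    (P T S : H →L[ℂ] H)
    (hP : IsSelfAdjoint P) (hP2 : P ∘L P = P)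
    (hT : IsSelfAdjoint T)
    (hS : S = (1 - P) ∘L S ∘L (1 - P))
    (hS1 : S ∘L ((1 - P) ∘L T ∘L (1 - P)) = 1 - P)
    (hS2 : ((1 - P) ∘L T ∘L (1 - P)) ∘L S = 1 - P)
    (F : H →L[ℂ] H)
    (hF : F = P ∘L T ∘L P - P ∘L T ∘L (1 - P) ∘L S ∘L (1 - P) ∘L T ∘L P)
    (φ : H) (hφ : φ ≠ 0) (hPφ : P φ = φ) (hFφ : F φ = 0) :
    φ - S (T φ) ≠ 0 ∧ T (φ - S (T φ)) = 0 := by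
  have hP2' : ∀ x, P (P x) = P x := fun x => congrArg (fun A => A x) hP2
  -- S x = (1-P) (S ((1-P) x))
  have hSx : ∀ x, S x = S (x - P x) - P (S (x - P x)) := by
    intro x
    have := congrArg (fun A => A x) hS
    simp only [ContinuousLinearMap.comp_apply, ContinuousLinearMap.sub_apply,
      ContinuousLinearMap.one_apply] at this
    exact this
  -- P ∘ S = 0
  have hPS : ∀ x, P (S x) = 0 := by
    intro x
    rw [hSx x]
    simp [map_sub, hP2']
  -- S ∘ (1-P) = S, pointwise: S (x - P x) = S x
  have hSQ : ∀ x, S (x - P x) = S x := by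
    intro x
    rw [hSx (x - P x), hSx x]
    simp [map_sub, hP2']
  -- From hFφ : P (T φ) = P (T (S (T φ)))
  have hFφ' : P (T φ) = P (T (S (T φ))) := by
    have h0 : F φ = 0 := hFφ
    rw [hF] at h0
    simp only [ContinuousLinearMap.comp_apply, ContinuousLinearMap.sub_apply,
      ContinuousLinearMap.one_apply] at h0
    rw [hPφ, hSQ (T φ), hPS (T φ), sub_zero] at h0
    exact sub_eq_zero.mp h0
  -- From hS2 : (1-P)(T(S(Tφ))) = (1-P)(Tφ)
  have hQ : T (S (T φ)) - P (T (S (T φ))) = T φ - P (T φ) := by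
    have := congrArg (fun A => A (T φ)) hS2
    simp only [ContinuousLinearMap.comp_apply, ContinuousLinearMap.sub_apply,
      ContinuousLinearMap.one_apply] at this
    rw [hPS (T φ), sub_zero] at this
    exact this
  have hTψ : T (φ - S (T φ)) = 0 := by
    have : T (S (T φ)) = T φ := by
      have := hQ
      rw [← hFφ'] at this
      exact sub_left_injective.eq_iff.mp this
    rw [map_sub, this, sub_self]
  refine ⟨?_, hTψ⟩
  intro h
  have : P (φ - S (T φ)) = φ := by
    rw [map_sub, hPφ, hPS (T φ), sub_zero]
  rw [h, map_zero] at this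
  exact hφ this.symm
end

section
/- Feshbach projection method, part (iv): with H, P, P⊥, T, S and the Feshbach map F as in the context, the map ψ ↦ P ψ restricts to a linear bijection from the kernel of T onto the subspace { φ ∈ H : F φ = 0 and P φ = φ } (the kernel of F intersected with the range of P); in particular, these two subspaces have the same dimension (the same Module.rank over ℂ). -/
/-- **Feshbach projection method, part (iv).**
With `H`, `P`, `P⊥ = 1 - P`, `T`, `S` and the Feshbach map
`F = P ∘ T ∘ P − P ∘ T ∘ P⊥ ∘ S ∘ P⊥ ∘ T ∘ P` as in the context:
the map `ψ ↦ P ψ` restricts to a linear bijection from `ker T` onto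
`ker F ∩ range P = {φ | F φ = 0 ∧ P φ = φ}`; in particular these two subspaces
have the same dimension over `ℂ`. -/
theorem feshbach_part_iv
    {H : Type*} [NormedAddCommGroup H] [InnerProductSpace ℂ H] [CompleteSpace H]
    (P T S : H →L[ℂ] H)
    (hP : IsSelfAdjoint P) (hP2 : P ∘L P = P)
    (hT : IsSelfAdjoint T)
    (hS : S = (1 - P) ∘L S ∘L (1 - P))
    (hS1 : S ∘L ((1 - P) ∘L T ∘L (1 - P)) = 1 - P)
    (hS2 : ((1 - P) ∘L T ∘L (1 - P)) ∘L S = 1 - P)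
    (F : H →L[ℂ] H)
    (hF : F = P ∘L T ∘L P - P ∘L T ∘L (1 - P) ∘L S ∘L (1 - P) ∘L T ∘L P) :
    (∃ e : ↥(LinearMap.ker (T : H →ₗ[ℂ] H)) ≃ₗ[ℂ]
        ↥(LinearMap.ker (F : H →ₗ[ℂ] H) ⊓ LinearMap.ker ((P - 1 : H →L[ℂ] H) : H →ₗ[ℂ] H)),
      ∀ x : ↥(LinearMap.ker (T : H →ₗ[ℂ] H)), (e x : H) = P (x : H)) ∧
    Module.rank ℂ ↥(LinearMap.ker (T : H →ₗ[ℂ] H)) =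
      Module.rank ℂ ↥(LinearMap.ker (F : H →ₗ[ℂ] H) ⊓ LinearMap.ker ((P - 1 : H →L[ℂ] H) : H →ₗ[ℂ] H)) := by
  have hP2' : P * P = P := hP2
  have hSm : S = (1 - P) * S * (1 - P) := hS
  have hS1' : S * ((1 - P) * T * (1 - P)) = 1 - P := hS1
  have hS2' : ((1 - P) * T * (1 - P)) * S = 1 - P := hS2
  have hFm : F = P * T * P - P * T * (1 - P) * S * (1 - P) * T * P := hF
  have hQ2 : (1 - P) * (1 - P) = 1 - P := by
    simp [mul_sub, sub_mul, hP2']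
  have hPQ : P * (1 - P) = 0 := by simp [mul_sub, hP2']
  have hQP : (1 - P) * P = 0 := by simp [sub_mul, hP2']
  -- S absorbs the projections
  have hQS : (1 - P) * S = S := by
    conv_lhs => rw [hSm]
    rw [← mul_assoc, ← mul_assoc, hQ2, ← hSm]
  have hSQ : S * (1 - P) = S := by
    conv_lhs => rw [hSm]
    rw [mul_assoc, hQ2, ← hSm]
  have hPS : P * S = 0 := by
    conv_lhs => rw [hSm]
    rw [← mul_assoc, ← mul_assoc, hPQ, zero_mul, zero_mul]
  -- key inverse identities
  have hSTQ : S * (T * (1 - P)) = 1 - P := by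
    calc S * (T * (1 - P)) = (S * (1 - P)) * (T * (1 - P)) := by rw [hSQ]
    _ = S * ((1 - P) * T * (1 - P)) := by noncomm_ring
    _ = 1 - P := hS1'
  have hQTS : ((1 - P) * T) * S = 1 - P := by
    calc ((1 - P) * T) * S = ((1 - P) * T) * ((1 - P) * S) := by rw [hQS]
    _ = ((1 - P) * T * (1 - P)) * S := by noncomm_ring
    _ = 1 - P := hS2'
  -- X = T - T*S*T ; show F = X
  set X : H →L[ℂ] H := T - T * S * T with hXdef
  have hXQ : X * (1 - P) = 0 := by
    rw [hXdef, sub_mul, mul_assoc, mul_assoc, hSTQ, sub_self]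
  have hQX : (1 - P) * X = 0 := by
    rw [hXdef, mul_sub]
    have h : (1 - P) * (T * S * T) = (1 - P) * T := by
      rw [← mul_assoc, ← mul_assoc, hQTS]
    rw [h, sub_self]
  have hXP : X * P = X := by
    have h := hXQ
    rw [mul_sub, mul_one, sub_eq_zero] at h
    exact h.symm
  have hPX : P * X = X := by
    have h := hQX
    rw [sub_mul, one_mul, sub_eq_zero] at h
    exact h.symm
  have hFX : F = X := by
    have h1 : F = P * T * P - P * T * S * T * P := by
      rw [hFm, mul_assoc (P * T) (1 - P) S, hQS, mul_assoc (P * T * S) (1 - P) T]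
      rw [show (P * T * S) * ((1 - P) * T) * P = (P * T * (S * (1 - P))) * T * P by noncomm_ring,
        hSQ]
    have h2 : P * T * P - P * T * S * T * P = P * X * P := by
      rw [hXdef]; noncomm_ring
    rw [h1, h2, hPX, hXP]
  -- pointwise consequences
  have happ : ∀ (A B : H →L[ℂ] H) (x : H), (A * B) x = A (B x) := fun _ _ _ => rfl
  have memf : ∀ ψ : H, T ψ = 0 →
      P ψ ∈ LinearMap.ker (F : H →ₗ[ℂ] H) ⊓ LinearMap.ker ((P - 1 : H →L[ℂ] H) : H →ₗ[ℂ] H) := by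
    intro ψ hψ
    refine Submodule.mem_inf.mpr ⟨LinearMap.mem_ker.mpr ?_, LinearMap.mem_ker.mpr ?_⟩
    · have h1 : F * P = F := by rw [hFX, hXP]
      have h2 : F (P ψ) = (F * P) ψ := rfl
      show F (P ψ) = 0
      rw [h2, h1, hFX]
      show T ψ - (T * S) (T ψ) = 0
      rw [hψ, map_zero, sub_zero]
    · have h3 : P (P ψ) = P ψ := by rw [← happ, hP2']
      simp [ContinuousLinearMap.sub_apply, h3]
  have memg : ∀ φ : H, φ ∈ LinearMap.ker (F : H →ₗ[ℂ] H) ⊓ LinearMap.ker ((P - 1 : H →L[ℂ] H) : H →ₗ[ℂ] H) →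
      T ((1 - S * T) φ) = 0 := by
    intro φ hφ
    obtain ⟨hφ1, _⟩ := Submodule.mem_inf.mp hφ
    have hFφ : F φ = 0 := LinearMap.mem_ker.mp hφ1
    have h : T ((1 - S * T) φ) = (T * (1 - S * T)) φ := rfl
    have h2 : T * (1 - S * T) = F := by rw [hFX, hXdef]; noncomm_ring
    rw [h, h2, hFφ]
  -- the two linear maps
  let K := LinearMap.ker (F : H →ₗ[ℂ] H) ⊓ LinearMap.ker ((P - 1 : H →L[ℂ] H) : H →ₗ[ℂ] H)
  let f : ↥(LinearMap.ker (T : H →ₗ[ℂ] H)) →ₗ[ℂ] ↥K :=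
    LinearMap.codRestrict K
      ((P : H →ₗ[ℂ] H) ∘ₗ (LinearMap.ker (T : H →ₗ[ℂ] H)).subtype)
      (fun ψ => memf ψ (LinearMap.mem_ker.mp ψ.2))
  let g : ↥K →ₗ[ℂ] ↥(LinearMap.ker (T : H →ₗ[ℂ] H)) :=
    LinearMap.codRestrict (LinearMap.ker (T : H →ₗ[ℂ] H))
      (((1 - S * T : H →L[ℂ] H) : H →ₗ[ℂ] H) ∘ₗ K.subtype)
      (fun φ => LinearMap.mem_ker.mpr (memg φ φ.2))
  have hCP : (1 - S * T) * P = 1 - S * T := by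
    have h1 : (S * T) * P = S * T - (1 - P) := by
      rw [mul_assoc, show T * P = T - T * (1 - P) by noncomm_ring, mul_sub, hSTQ]
    rw [sub_mul, one_mul, h1]
    noncomm_ring
  have hPC : P * (1 - S * T) = P := by
    rw [mul_sub, mul_one, ← mul_assoc, hPS, zero_mul, sub_zero]
  have hfg : f ∘ₗ g = LinearMap.id := by
    apply LinearMap.ext; intro φ; apply Subtype.ext
    have hPφ : P (φ : H) = (φ : H) := by
      obtain ⟨_, h2⟩ := Submodule.mem_inf.mp φ.2
      have h3 := LinearMap.mem_ker.mp h2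
      have h4 : P (φ : H) - (φ : H) = 0 := by
        simpa [ContinuousLinearMap.sub_apply] using h3
      exact sub_eq_zero.mp h4
    show P ((1 - S * T) (φ : H)) = (φ : H)
    calc P ((1 - S * T) (φ : H)) = (P * (1 - S * T)) (φ : H) := rfl
    _ = P (φ : H) := by rw [hPC]
    _ = (φ : H) := hPφ
  have hgf : g ∘ₗ f = LinearMap.id := by
    apply LinearMap.ext; intro ψ; apply Subtype.ext
    have hTψ : T (ψ : H) = 0 := LinearMap.mem_ker.mp ψ.2
    show (1 - S * T) (P (ψ : H)) = (ψ : H)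
    calc (1 - S * T) (P (ψ : H)) = ((1 - S * T) * P) (ψ : H) := rfl
    _ = (1 - S * T) (ψ : H) := by rw [hCP]
    _ = (ψ : H) - S (T (ψ : H)) := rfl
    _ = (ψ : H) := by rw [hTψ, map_zero, sub_zero]
  let e : ↥(LinearMap.ker (T : H →ₗ[ℂ] H)) ≃ₗ[ℂ] ↥K := LinearEquiv.ofLinear f g hfg hgf
  exact ⟨⟨e, fun x => rfl⟩, e.rank_eq⟩
end

section
/- The spectrum of the discrete Laplacian h on ℓ²(ℤ) equals the real interval [0, 4] (viewed as a subset of ℂ). -/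
open scoped ENNReal
set_option maxHeartbeats 2000000
set_option synthInstance.maxHeartbeats 1000000
noncomputable section
local notation "H2" => lp (fun _ : ℤ => ℂ) 2

instance : Nontrivial (lp (fun _ : ℤ => ℂ) 2) := by
  have h1 : (lp.single (E := fun _ : ℤ => ℂ) 2 0 1) 0 = 1 :=
    lp.single_apply_self (E := fun _ : ℤ => ℂ) 2 0 1
  refine ⟨⟨lp.single (E := fun _ : ℤ => ℂ) 2 0 1, 0, fun hc => ?_⟩⟩
  rw [hc, lp.coeFn_zero] at h1
  simp at h1


lemma memℓp_shift (f : H2) (k : ℤ) : Memℓp (fun n : ℤ => f (n + k)) 2 := by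
  apply memℓp_gen
  have hs : Summable fun i : ℤ => ‖f i‖ ^ (2 : ℝ≥0∞).toReal :=
    (memℓp_gen_iff (by norm_num)).1 (lp.memℓp f)
  exact ((Equiv.addRight k).summable_iff).2 hs

lemma norm_shift (f : H2) (k : ℤ) : ‖(⟨fun n : ℤ => f (n + k), memℓp_shift f k⟩ : H2)‖ = ‖f‖ := by
  refine Real.rpow_left_injOn (x := (2 : ℝ≥0∞).toReal) (by norm_num)
    (norm_nonneg _) (norm_nonneg _) ?_
  simp only
  rw [lp.norm_rpow_eq_tsum (by norm_num), lp.norm_rpow_eq_tsum (by norm_num)]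
  exact ((Equiv.addRight k).tsum_eq fun i => ‖f i‖ ^ (2 : ℝ≥0∞).toReal)

lemma shifted_eq (h : H2 →L[ℂ] H2)
    (hh : ∀ f : H2, ∀ n : ℤ, (h f) n = 2 * f n - f (n + 1) - f (n - 1)) (f : H2) :
    (h - algebraMap ℂ (H2 →L[ℂ] H2) 2) f
      = -(⟨fun n : ℤ => f (n + 1), memℓp_shift f 1⟩ : H2)
        + -(⟨fun n : ℤ => f (n + (-1)), memℓp_shift f (-1)⟩ : H2) := by
  apply lp.ext
  funext n
  have h1 : ((h - algebraMap ℂ (H2 →L[ℂ] H2) 2) f) n = (h f) n - ((2:ℂ) • f) n := by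
    rw [Algebra.algebraMap_eq_smul_one]
    simp [ContinuousLinearMap.sub_apply]; rfl
  rw [h1, hh f n]
  have : ((2:ℂ) • f) n = 2 * f n := by rw [lp.coeFn_smul]; simp [smul_eq_mul]
  rw [this]
  have h2 : (-(⟨fun n : ℤ => f (n + 1), memℓp_shift f 1⟩ : H2)
        + -(⟨fun n : ℤ => f (n + (-1)), memℓp_shift f (-1)⟩ : H2)) n
      = -f (n + 1) + -f (n + (-1)) := by
    rw [lp.coeFn_add]; simp [lp.coeFn_neg]; rfl
  rw [h2]
  have : n + (-1) = n - 1 := by ring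
  rw [this]; ring

lemma opnorm_bound (h : H2 →L[ℂ] H2)
    (hh : ∀ f : H2, ∀ n : ℤ, (h f) n = 2 * f n - f (n + 1) - f (n - 1)) :
    ‖h - algebraMap ℂ (H2 →L[ℂ] H2) 2‖ ≤ 2 := by
  refine ContinuousLinearMap.opNorm_le_bound _ (by norm_num) fun f => ?_
  rw [shifted_eq h hh f]
  calc ‖_ + _‖ ≤ ‖-(⟨fun n : ℤ => f (n + 1), memℓp_shift f 1⟩ : H2)‖
        + ‖-(⟨fun n : ℤ => f (n + (-1)), memℓp_shift f (-1)⟩ : H2)‖ := norm_add_le _ _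
    _ = ‖f‖ + ‖f‖ := by rw [norm_neg, norm_neg, norm_shift, norm_shift]
    _ = 2 * ‖f‖ := by ring

lemma eq_sum_single (g : H2) (s : Finset ℤ) (hs : ∀ n ∉ s, g n = 0) :
    g = ∑ i ∈ s, lp.single 2 i (g i) := by
  apply lp.ext; funext n
  rw [lp.coeFn_sum]
  simp only [Finset.sum_apply, lp.single_apply, Finset.sum_dite_eq]
  by_cases hn : n ∈ s
  · simp [hn]
  · simp [hn, hs n hn]

lemma norm_sq_eq (g : H2) (s : Finset ℤ) (hs : ∀ n ∉ s, g n = 0) :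
    ‖g‖ ^ 2 = ∑ i ∈ s, ‖g i‖ ^ 2 := by
  have h1 : ‖g‖ ^ (2 : ℝ≥0∞).toReal = ∑ i ∈ s, ‖(g : ∀ _ : ℤ, ℂ) i‖ ^ (2 : ℝ≥0∞).toReal := by
    conv_lhs => rw [eq_sum_single g s hs]
    exact lp.norm_sum_single (by norm_num) _ s
  have ht : (2 : ℝ≥0∞).toReal = ((2:ℕ):ℝ) := by norm_num
  rw [ht] at h1
  simp only [Real.rpow_natCast] at h1
  exact_mod_cast h1

def ee (θ : ℝ) (n : ℤ) : ℂ := Complex.exp ((θ * n : ℝ) * Complex.I)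

lemma ee_norm (θ : ℝ) (n : ℤ) : ‖ee θ n‖ = 1 := by
  simp [ee, Complex.norm_exp]

lemma ee_rec (θ : ℝ) (n : ℤ) :
    ee θ (n + 1) + ee θ (n - 1) = (2 * Real.cos θ : ℝ) * ee θ n := by
  have h1 : ((θ * ((n + 1 : ℤ) : ℝ) : ℝ) : ℂ) * Complex.I
      = (θ * n : ℝ) * Complex.I + ((θ : ℂ)) * Complex.I := by push_cast; ring
  have h2 : ((θ * ((n - 1 : ℤ) : ℝ) : ℝ) : ℂ) * Complex.I
      = (θ * n : ℝ) * Complex.I + ((-θ : ℝ) : ℂ) * Complex.I := by push_cast; ring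
  simp only [ee]
  rw [h1, h2, Complex.exp_add, Complex.exp_add]
  simp only [Complex.exp_mul_I, Complex.ofReal_neg, Complex.cos_neg, Complex.sin_neg]
  push_cast [Complex.ofReal_cos]
  ring


/-- The spectrum of the discrete Laplacian `h` on `ℓ²(ℤ)`, given by
`(h f)(n) = 2 f(n) − f(n+1) − f(n−1)`, equals the real interval `[0, 4]`
viewed as a subset of `ℂ`. -/
theorem spectrum_discrete_laplacian_int
    (h : lp (fun _ : ℤ => ℂ) 2 →L[ℂ] lp (fun _ : ℤ => ℂ) 2)
    (hsa : IsSelfAdjoint h)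
    (hh : ∀ f : lp (fun _ : ℤ => ℂ) 2, ∀ n : ℤ,
      (h f) n = 2 * f n - f (n + 1) - f (n - 1)) :
    spectrum ℂ h = (fun x : ℝ => (x : ℂ)) '' Set.Icc 0 4 := by
  have halg : ∀ (z : ℂ) (f : H2) (j : ℤ),
      ((algebraMap ℂ (H2 →L[ℂ] H2) z - h) f) j = z * f j - (h f) j := by
    intro z f j
    rw [ContinuousLinearMap.sub_apply, lp.coeFn_sub, Pi.sub_apply,
      Algebra.algebraMap_eq_smul_one, ContinuousLinearMap.smul_apply,
      ContinuousLinearMap.one_apply, lp.coeFn_smul, Pi.smul_apply, smul_eq_mul]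
  apply Set.Subset.antisymm
  · -- spectrum ⊆ [0,4]
    intro z hz
    have hzre : z = z.re := hsa.mem_spectrum_eq_re hz
    have hmem : z - 2 ∈ spectrum ℂ (h - algebraMap ℂ (H2 →L[ℂ] H2) 2) := by
      rw [← spectrum.sub_singleton_eq]
      exact Set.sub_mem_sub hz rfl
    have hb := spectrum.norm_le_norm_of_mem hmem
    have hb2 := opnorm_bound h hh
    have he : z - 2 = ((z.re - 2 : ℝ) : ℂ) := by
      conv_lhs => rw [hzre]
      push_cast; ring
    rw [he] at hb
    rw [Complex.norm_real] at hb
    have habs : |z.re - 2| ≤ 2 := le_trans hb hb2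
    rw [abs_le] at habs
    exact ⟨z.re, ⟨by linarith [habs.1], by linarith [habs.2]⟩, hzre.symm⟩
  · -- [0,4] ⊆ spectrum
    rintro z ⟨x, ⟨hx0, hx4⟩, rfl⟩
    by_contra hz
    rw [spectrum.mem_iff, not_not] at hz
    set u := hz.unit with hu
    set K := ‖((↑u⁻¹ : H2 →L[ℂ] H2))‖ with hK
    have hKf : ∀ f : H2, ‖f‖ ≤ K * ‖(algebraMap ℂ (H2 →L[ℂ] H2) (x : ℂ) - h) f‖ := by
      intro f
      have h1 : (↑u⁻¹ : H2 →L[ℂ] H2) ((algebraMap ℂ (H2 →L[ℂ] H2) (x : ℂ) - h) f) = f := by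
        have honef : (1 : H2 →L[ℂ] H2) f = f := rfl
        conv_rhs => rw [← honef, ← u.inv_mul]
        rw [ContinuousLinearMap.mul_apply, hz.unit_spec]
      conv_lhs => rw [← h1]
      exact ContinuousLinearMap.le_opNorm _ _
    set θ := Real.arccos (1 - x / 2) with hθ
    have hcos : Real.cos θ = 1 - x / 2 :=
      Real.cos_arccos (by linarith) (by linarith)
    have key : ∀ N : ℕ, 2 * (N : ℝ) + 1 ≤ (K * 16) ^ 2 := by
      intro N
      set s : Finset ℤ := Finset.Icc (-(N : ℤ)) (N : ℤ) with hs
      set fN : H2 := ∑ i ∈ s, lp.single 2 i (ee θ i) with hfN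
      have hcoord : ∀ j : ℤ, fN j = if j ∈ s then ee θ j else 0 := by
        intro j
        rw [hfN, lp.coeFn_sum]
        simp only [Finset.sum_apply, lp.single_apply, Finset.sum_dite_eq, Pi.single_apply, Finset.sum_ite_eq, Finset.sum_ite_eq']
      have hcoordle : ∀ j : ℤ, ‖fN j‖ ≤ 1 := by
        intro j
        rw [hcoord]
        split
        · exact le_of_eq (ee_norm θ j)
        · simp
      have hcard : (s.card : ℝ) = 2 * (N : ℝ) + 1 := by
        rw [hs, Int.card_Icc]
        have : ((N : ℤ) + 1 - -(N : ℤ)).toNat = 2 * N + 1 := by omega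
        rw [this]; push_cast; ring
      have hnormf : ‖fN‖ ^ 2 = 2 * (N : ℝ) + 1 := by
        have h1 : ‖fN‖ ^ (2 : ℝ≥0∞).toReal = ∑ i ∈ s, ‖ee θ i‖ ^ (2 : ℝ≥0∞).toReal :=
          lp.norm_sum_single (by norm_num) _ s
        have ht : (2 : ℝ≥0∞).toReal = ((2 : ℕ) : ℝ) := by norm_num
        simp only [ht, Real.rpow_natCast] at h1
        rw [h1]
        have h3 : ∀ i ∈ s, ‖ee θ i‖ ^ (2 : ℕ) = 1 := fun i _ => by rw [ee_norm]; norm_num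
        rw [Finset.sum_congr rfl h3, Finset.sum_const, nsmul_eq_mul, mul_one, hcard]
      set g : H2 := (algebraMap ℂ (H2 →L[ℂ] H2) (x : ℂ) - h) fN with hg
      have hgc : ∀ j : ℤ, g j = (x : ℂ) * fN j - (2 * fN j - fN (j + 1) - fN (j - 1)) := by
        intro j
        rw [hg, halg, hh]
      set sBig : Finset ℤ := {-(N : ℤ) - 1, -(N : ℤ), (N : ℤ), (N : ℤ) + 1} with hsBig
      have hsupp : ∀ j ∉ sBig, g j = 0 := by
        intro j hj
        simp only [hsBig, Finset.mem_insert, Finset.mem_singleton, not_or] at hj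
        rw [hgc]
        by_cases hcase : -(N : ℤ) < j ∧ j < (N : ℤ)
        · have hj0 : j ∈ s := by rw [hs, Finset.mem_Icc]; omega
          have hj1 : j + 1 ∈ s := by rw [hs, Finset.mem_Icc]; omega
          have hj2 : j - 1 ∈ s := by rw [hs, Finset.mem_Icc]; omega
          rw [hcoord j, hcoord (j + 1), hcoord (j - 1), if_pos hj0, if_pos hj1, if_pos hj2]
          have hr := ee_rec θ j
          rw [hcos] at hr
          push_cast at hr
          linear_combination hr
        · have hj0 : j ∉ s := by rw [hs, Finset.mem_Icc]; omega
          have hj1 : j + 1 ∉ s := by rw [hs, Finset.mem_Icc]; omega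
          have hj2 : j - 1 ∉ s := by rw [hs, Finset.mem_Icc]; omega
          rw [hcoord j, hcoord (j + 1), hcoord (j - 1), if_neg hj0, if_neg hj1, if_neg hj2]
          ring
      have hxnorm : ‖(x : ℂ)‖ ≤ 4 := by
        rw [Complex.norm_real]
        rw [Real.norm_eq_abs, abs_le]
        constructor <;> linarith
      have hgbound : ∀ j : ℤ, ‖g j‖ ≤ 8 := by
        intro j
        rw [hgc]
        calc ‖(x : ℂ) * fN j - (2 * fN j - fN (j + 1) - fN (j - 1))‖
            ≤ ‖(x : ℂ) * fN j‖ + ‖2 * fN j - fN (j + 1) - fN (j - 1)‖ := norm_sub_le _ _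
          _ ≤ ‖(x : ℂ) * fN j‖ + (‖(2 : ℂ) * fN j‖ + ‖fN (j + 1)‖ + ‖fN (j - 1)‖) := by
              have := norm_sub_le ((2 : ℂ) * fN j - fN (j + 1)) (fN (j - 1))
              have := norm_sub_le ((2 : ℂ) * fN j) (fN (j + 1))
              linarith
          _ ≤ 4 * 1 + (2 * 1 + 1 + 1) := by
              have h1 := hcoordle j
              have h2 := hcoordle (j + 1)
              have h3 := hcoordle (j - 1)
              have h4 : ‖(x : ℂ) * fN j‖ = ‖(x : ℂ)‖ * ‖fN j‖ := norm_mul _ _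
              have h5 : ‖(2 : ℂ) * fN j‖ = ‖(2 : ℂ)‖ * ‖fN j‖ := norm_mul _ _
              have h6 : ‖(2 : ℂ)‖ = 2 := by norm_num
              have h7 : (0 : ℝ) ≤ ‖fN j‖ := norm_nonneg _
              have h8 : (0 : ℝ) ≤ ‖(x : ℂ)‖ := norm_nonneg _
              nlinarith
          _ = 8 := by norm_num
      have hcardBig : (sBig.card : ℝ) ≤ 4 := by
        have h1 : sBig.card ≤ 4 := by
          refine le_trans (Finset.card_insert_le _ _) ?_
          refine Nat.succ_le_succ ?_
          refine le_trans (Finset.card_insert_le _ _) ?_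
          refine Nat.succ_le_succ ?_
          refine le_trans (Finset.card_insert_le _ _) ?_
          simp
        exact_mod_cast h1
      have hgnorm2 : ‖g‖ ^ 2 ≤ 256 := by
        rw [norm_sq_eq g sBig hsupp]
        calc ∑ i ∈ sBig, ‖g i‖ ^ 2 ≤ ∑ i ∈ sBig, (8 : ℝ) ^ 2 := by
              refine Finset.sum_le_sum fun i _ => ?_
              have := hgbound i
              have := norm_nonneg (g i)
              nlinarith
          _ = (sBig.card : ℝ) * 64 := by rw [Finset.sum_const]; rw [nsmul_eq_mul]; norm_num
          _ ≤ 4 * 64 := by linarith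
          _ = 256 := by norm_num
      have hgnorm : ‖g‖ ≤ 16 := by nlinarith [norm_nonneg g]
      have hf16 : ‖fN‖ ≤ K * 16 := by
        have := hKf fN
        have hK0 : (0 : ℝ) ≤ K := norm_nonneg _
        calc ‖fN‖ ≤ K * ‖g‖ := this
          _ ≤ K * 16 := by nlinarith
      have : ‖fN‖ ^ 2 ≤ (K * 16) ^ 2 := by nlinarith [norm_nonneg fN]
      linarith [hnormf ▸ this]
    obtain ⟨N, hN⟩ := exists_nat_gt ((K * 16) ^ 2)
    have h1 := key N
    have h2 : (N : ℝ) ≤ 2 * (N : ℝ) + 1 := by have : (0:ℝ) ≤ (N:ℝ) := Nat.cast_nonneg N; linarith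
    linarith
end
end

section
/- The spectrum of the Laplacian Δ₀ on the square lattice equals the real interval [0, 8] (viewed as a subset of ℂ). -/
open Complex
open scoped ENNReal

noncomputable section
set_option maxHeartbeats 1000000
set_option synthInstance.maxHeartbeats 400000

namespace SqLatticeAux

abbrev Hs : Type := lp (fun _ : ℤ × ℤ => ℂ) 2

lemma tr2 : (2 : ℝ≥0∞).toReal = 2 := by norm_num
lemma tr2pos : 0 < (2 : ℝ≥0∞).toReal := by norm_num

lemma memℓp_two_iff (f : ℤ × ℤ → ℂ) :
    Memℓp f 2 ↔ Summable (fun m => ‖f m‖ ^ (2:ℝ)) := by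
  rw [memℓp_gen_iff tr2pos, tr2]

lemma shift_mem (f : Hs) (v : ℤ × ℤ) : Memℓp (fun m => (f : ℤ×ℤ → ℂ) (m + v)) 2 := by
  rw [memℓp_two_iff]
  have h1 := (memℓp_two_iff f).1 (lp.memℓp f)
  have := (Equiv.addRight v).summable_iff (f := fun m => ‖(f : ℤ×ℤ→ℂ) m‖ ^ (2:ℝ))
  exact this.mpr h1

def shift (v : ℤ × ℤ) (f : Hs) : Hs := ⟨fun m => f (m + v), shift_mem f v⟩

@[simp] lemma shift_apply (v : ℤ × ℤ) (f : Hs) (m : ℤ × ℤ) :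
    (shift v f : ℤ×ℤ → ℂ) m = f (m + v) := rfl

lemma norm_shift (v : ℤ × ℤ) (f : Hs) : ‖shift v f‖ = ‖f‖ := by
  rw [lp.norm_eq_tsum_rpow tr2pos (shift v f), lp.norm_eq_tsum_rpow tr2pos f]
  congr 1
  exact (Equiv.addRight v).tsum_eq (fun m => ‖(f : ℤ×ℤ→ℂ) m‖ ^ (2:ℝ≥0∞).toReal)


lemma key_norm (Δ₀ : Hs →L[ℂ] Hs)
    (hΔ : ∀ f : Hs, ∀ m : ℤ × ℤ,
      (Δ₀ f) m = 4 * f m - f (m + (1, 0)) - f (m - (1, 0))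
        - f (m + (0, 1)) - f (m - (0, 1))) :
    ‖Δ₀ - algebraMap ℂ (Hs →L[ℂ] Hs) 4‖ ≤ 4 := by
  refine ContinuousLinearMap.opNorm_le_bound _ (by norm_num) fun f => ?_
  have hfun : (Δ₀ - algebraMap ℂ (Hs →L[ℂ] Hs) 4) f
      = -(shift (1,0) f + shift (-1,0) f + shift (0,1) f + shift (0,-1) f) := by
    apply Subtype.ext
    funext m
    have h1 : m - (1,0) = m + ((-1 : ℤ), (0:ℤ)) := by
      simp [Prod.ext_iff]; ring
    have h2 : m - (0,1) = m + ((0 : ℤ), (-1:ℤ)) := by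
      simp [Prod.ext_iff]; ring
    simp only [ContinuousLinearMap.sub_apply, Algebra.algebraMap_eq_smul_one,
      ContinuousLinearMap.smul_apply, ContinuousLinearMap.one_apply,
      lp.coeFn_sub, lp.coeFn_neg, lp.coeFn_add, lp.coeFn_smul, Pi.sub_apply, Pi.neg_apply,
      Pi.add_apply, Pi.smul_apply, shift_apply, smul_eq_mul]
    rw [hΔ f m, h1, h2]
    ring
  rw [hfun, norm_neg]
  calc ‖shift (1,0) f + shift (-1,0) f + shift (0,1) f + shift (0,-1) f‖
      ≤ ‖shift (1,0) f‖ + ‖shift (-1,0) f‖ + ‖shift (0,1) f‖ + ‖shift (0,-1) f‖ := by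
        refine le_trans (norm_add_le _ _) ?_
        refine add_le_add (le_trans (norm_add_le _ _) (add_le_add (norm_add_le _ _) le_rfl)) le_rfl
    _ = 4 * ‖f‖ := by rw [norm_shift, norm_shift, norm_shift, norm_shift]; ring


instance : Nontrivial Hs := by
  refine ⟨lp.single 2 (0,0) (1:ℂ), 0, fun h => ?_⟩
  have := congrFun (congrArg (Subtype.val) h) (0,0)
  rw [lp.single_apply_self] at this
  simpa using this

lemma spec_subset (Δ₀ : Hs →L[ℂ] Hs) (hsa : IsSelfAdjoint Δ₀)
    (hΔ : ∀ f : Hs, ∀ m : ℤ × ℤ,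
      (Δ₀ f) m = 4 * f m - f (m + (1, 0)) - f (m - (1, 0))
        - f (m + (0, 1)) - f (m - (0, 1))) :
    spectrum ℂ Δ₀ ⊆ (fun x : ℝ => (x : ℂ)) '' Set.Icc 0 8 := by
  intro z hz
  have hre : z = (z.re : ℂ) := hsa.mem_spectrum_eq_re hz
  have hmem : z - 4 ∈ spectrum ℂ (Δ₀ - algebraMap ℂ (Hs →L[ℂ] Hs) 4) := by
    rw [← spectrum.sub_singleton_eq]
    exact Set.sub_mem_sub hz rfl
  have hb : ‖z - 4‖ ≤ 4 :=
    le_trans (spectrum.norm_le_norm_of_mem hmem) (key_norm Δ₀ hΔ)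
  refine ⟨z.re, ?_, hre.symm⟩
  rw [hre] at hb
  have : ((z.re : ℂ) - 4) = ((z.re - 4 : ℝ) : ℂ) := by push_cast; ring
  rw [this, Complex.norm_real] at hb
  have := abs_le.1 hb
  constructor <;> linarith [this.1, this.2]


def wave (θ : ℝ) (m : ℤ × ℤ) : ℂ := Complex.exp ((θ * (m.1 + m.2) : ℝ) * I)

lemma wave_norm (θ : ℝ) (m : ℤ × ℤ) : ‖wave θ m‖ = 1 := by
  rw [wave]
  exact Complex.norm_exp_ofReal_mul_I _

lemma wave_add (θ : ℝ) (m v : ℤ × ℤ) :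
    wave θ (m + v) = wave θ m * Complex.exp ((θ * (v.1 + v.2) : ℝ) * I) := by
  rw [wave, wave, ← Complex.exp_add]
  congr 1
  have : ((m + v).1 : ℂ) = m.1 + v.1 := by push_cast [Prod.fst_add]; ring
  have h2 : ((m + v).2 : ℂ) = m.2 + v.2 := by push_cast [Prod.snd_add]; ring
  push_cast
  rw [Prod.fst_add, Prod.snd_add]
  push_cast
  ring

lemma wave_identity {x θ : ℝ} (hc : Real.cos θ = 1 - x / 4) (m : ℤ × ℤ) :
    (x : ℂ) * wave θ m - (4 * wave θ m - wave θ (m + (1, 0)) - wave θ (m - (1, 0))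
      - wave θ (m + (0, 1)) - wave θ (m - (0, 1))) = 0 := by
  have e1 : m - (1,0) = m + ((-1 : ℤ), (0:ℤ)) := by simp [Prod.ext_iff]; ring
  have e2 : m - (0,1) = m + ((0 : ℤ), (-1:ℤ)) := by simp [Prod.ext_iff]; ring
  rw [e1, e2, wave_add, wave_add, wave_add, wave_add]
  have hcos : Complex.exp ((θ:ℂ) * I) + Complex.exp ((-θ:ℂ) * I) = 2 * (1 - (x:ℂ)/4) := by
    rw [Complex.exp_mul_I, Complex.exp_mul_I, Complex.cos_neg, Complex.sin_neg]
    have : Complex.cos (θ:ℂ) = ((1 - x/4 : ℝ) : ℂ) := by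
      rw [← Complex.ofReal_cos, hc]
    rw [this]
    push_cast
    ring
  have h1 : ((θ * ((1:ℤ) + (0:ℤ)) : ℝ) : ℂ) = (θ:ℂ) := by push_cast; ring
  have h2 : ((θ * ((-1:ℤ) + (0:ℤ)) : ℝ) : ℂ) = (-θ:ℂ) := by push_cast; ring
  have h3 : ((θ * ((0:ℤ) + (1:ℤ)) : ℝ) : ℂ) = (θ:ℂ) := by push_cast; ring
  have h4 : ((θ * ((0:ℤ) + (-1:ℤ)) : ℝ) : ℂ) = (-θ:ℂ) := by push_cast; ring
  rw [h1, h2, h3, h4]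
  linear_combination (2 * wave θ m) * hcos

def box (r : ℕ) : Finset (ℤ × ℤ) := Finset.Icc (-(r:ℤ)) r ×ˢ Finset.Icc (-(r:ℤ)) r

lemma mem_box {r : ℕ} {k : ℤ × ℤ} : k ∈ box r ↔ |k.1| ≤ (r:ℤ) ∧ |k.2| ≤ (r:ℤ) := by
  simp [box, Finset.mem_product, Finset.mem_Icc, abs_le]

lemma card_box (r : ℕ) : (box r).card = (2*r+1)^2 := by
  rw [box, Finset.card_product, Int.card_Icc]
  have : ((r:ℤ) + 1 - (-(r:ℤ))).toNat = 2*r+1 := by omega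
  rw [this]; ring


def Fel (θ : ℝ) (r : ℕ) : Hs := ∑ m ∈ box r, lp.single 2 m (wave θ m)

lemma Fel_apply (θ : ℝ) (r : ℕ) (k : ℤ × ℤ) :
    (Fel θ r : ℤ × ℤ → ℂ) k = if k ∈ box r then wave θ k else 0 := by
  simp only [Fel, lp.coeFn_sum, Finset.sum_apply, lp.single_apply, Pi.single_apply, Finset.sum_ite_eq]

lemma Fel_norm_le (θ : ℝ) (r : ℕ) (k : ℤ × ℤ) : ‖(Fel θ r : ℤ × ℤ → ℂ) k‖ ≤ 1 := by
  rw [Fel_apply]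
  split
  · rw [wave_norm]
  · simp

lemma rp2 (a : ℝ) : a ^ (2:ℝ≥0∞).toReal = a ^ 2 := by
  rw [tr2, show (2:ℝ) = ((2:ℕ):ℝ) by norm_num, Real.rpow_natCast]

lemma main_est (Δ₀ : Hs →L[ℂ] Hs)
    (hΔ : ∀ f : Hs, ∀ m : ℤ × ℤ,
      (Δ₀ f) m = 4 * f m - f (m + (1, 0)) - f (m - (1, 0))
        - f (m + (0, 1)) - f (m - (0, 1)))
    {x : ℝ} (hx : x ∈ Set.Icc (0:ℝ) 8)
    (u : (Hs →L[ℂ] Hs)ˣ) (hu : (↑u : Hs →L[ℂ] Hs) = algebraMap ℂ (Hs →L[ℂ] Hs) (x:ℂ) - Δ₀)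
    (M : ℕ) :
    ((2*(M+1)+1 : ℕ) : ℝ)^2 ≤ ‖(↑u⁻¹ : Hs →L[ℂ] Hs)‖^2 * 256 * ((16*M+24 : ℕ):ℝ) := by
  set θ := Real.arccos (1 - x/4) with hθ
  have hcos : Real.cos θ = 1 - x/4 :=
    Real.cos_arccos (by linarith [hx.2]) (by linarith [hx.1])
  set F : Hs := Fel θ (M+1) with hF
  set G : Hs := (↑u : Hs →L[ℂ] Hs) F with hG
  set S : Finset (ℤ × ℤ) := box (M+2) \ box M with hS
  -- coordinates of G
  have hGk : ∀ k, (G : ℤ × ℤ → ℂ) k = (x:ℂ) * (F : ℤ×ℤ→ℂ) k - (Δ₀ F : ℤ×ℤ→ℂ) k := by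
    intro k
    rw [hG, hu]
    have : ((algebraMap ℂ (Hs →L[ℂ] Hs) (x:ℂ) - Δ₀) F) = (x:ℂ) • F - Δ₀ F := by
      rw [ContinuousLinearMap.sub_apply, Algebra.algebraMap_eq_smul_one]
      rfl
    rw [this, lp.coeFn_sub, Pi.sub_apply, lp.coeFn_smul, Pi.smul_apply, smul_eq_mul]
  -- vanishing outside the strip
  have hzero : ∀ k ∉ S, (G : ℤ × ℤ → ℂ) k = 0 := by
    intro k hk
    rw [Finset.mem_sdiff, not_and_or, not_not] at hk
    rw [hGk k, hΔ F k]
    rcases hk with hk | hk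
    · -- k outside the big box : all five values vanish
      have h0 : ∀ j : ℤ × ℤ, |j.1 - k.1| + |j.2 - k.2| ≤ 1 → (F : ℤ×ℤ→ℂ) j = 0 := by
        intro j hj
        have hjn : j ∉ box (M+1) := by
          rw [mem_box] at hk ⊢
          have t3 := abs_sub_abs_le_abs_sub k.1 j.1
          have t4 := abs_sub_abs_le_abs_sub k.2 j.2
          rw [abs_sub_comm k.1 j.1] at t3
          rw [abs_sub_comm k.2 j.2] at t4
          have n1 := abs_nonneg (j.1 - k.1)
          have n2 := abs_nonneg (j.2 - k.2)
          omega
        rw [hF, Fel_apply, if_neg hjn]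
      rw [h0 k (by simp), h0 (k + (1,0)) (by simp [Prod.fst_add, Prod.snd_add]),
        h0 (k - (1,0)) (by simp [Prod.fst_sub, Prod.snd_sub]),
        h0 (k + (0,1)) (by simp [Prod.fst_add, Prod.snd_add]),
        h0 (k - (0,1)) (by simp [Prod.fst_sub, Prod.snd_sub])]
      ring
    · -- k in the small box : all five points are in box (M+1), use the wave identity
      have hin : ∀ j : ℤ × ℤ, |j.1 - k.1| + |j.2 - k.2| ≤ 1 → (F : ℤ×ℤ→ℂ) j = wave θ j := by
        intro j hj
        have hjn : j ∈ box (M+1) := by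
          rw [mem_box] at hk ⊢
          have t1 := abs_sub_abs_le_abs_sub j.1 k.1
          have t2 := abs_sub_abs_le_abs_sub j.2 k.2
          have n1 := abs_nonneg (j.1 - k.1)
          have n2 := abs_nonneg (j.2 - k.2)
          omega
        rw [hF, Fel_apply, if_pos hjn]
      rw [hin k (by simp), hin (k + (1,0)) (by simp [Prod.fst_add, Prod.snd_add]),
        hin (k - (1,0)) (by simp [Prod.fst_sub, Prod.snd_sub]),
        hin (k + (0,1)) (by simp [Prod.fst_add, Prod.snd_add]),
        hin (k - (0,1)) (by simp [Prod.fst_sub, Prod.snd_sub])]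
      exact wave_identity hcos k
  -- pointwise bound
  have hGb : ∀ k, ‖(G : ℤ × ℤ → ℂ) k‖ ≤ 16 := by
    intro k
    rw [hGk k, hΔ F k]
    have b0 := Fel_norm_le θ (M+1) k
    have b1 := Fel_norm_le θ (M+1) (k + (1,0))
    have b2 := Fel_norm_le θ (M+1) (k - (1,0))
    have b3 := Fel_norm_le θ (M+1) (k + (0,1))
    have b4 := Fel_norm_le θ (M+1) (k - (0,1))
    have hx8 : ‖(x:ℂ)‖ ≤ 8 := by
      rw [Complex.norm_real, Real.norm_eq_abs, abs_le]
      exact ⟨by linarith [hx.1], hx.2⟩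
    calc ‖(x:ℂ) * (F : ℤ×ℤ→ℂ) k - (4 * (F : ℤ×ℤ→ℂ) k - (F : ℤ×ℤ→ℂ) (k + (1,0))
          - (F : ℤ×ℤ→ℂ) (k - (1,0)) - (F : ℤ×ℤ→ℂ) (k + (0,1)) - (F : ℤ×ℤ→ℂ) (k - (0,1)))‖
        ≤ ‖(x:ℂ) * (F : ℤ×ℤ→ℂ) k‖ + ‖4 * (F : ℤ×ℤ→ℂ) k - (F : ℤ×ℤ→ℂ) (k + (1,0))
          - (F : ℤ×ℤ→ℂ) (k - (1,0)) - (F : ℤ×ℤ→ℂ) (k + (0,1)) - (F : ℤ×ℤ→ℂ) (k - (0,1))‖ :=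
          norm_sub_le _ _
      _ ≤ ‖(x:ℂ) * (F : ℤ×ℤ→ℂ) k‖ + (‖4 * (F : ℤ×ℤ→ℂ) k‖ + ‖(F : ℤ×ℤ→ℂ) (k + (1,0))‖
          + ‖(F : ℤ×ℤ→ℂ) (k - (1,0))‖ + ‖(F : ℤ×ℤ→ℂ) (k + (0,1))‖
          + ‖(F : ℤ×ℤ→ℂ) (k - (0,1))‖) := by
          gcongr
          refine le_trans (norm_sub_le _ _) ?_
          gcongr
          refine le_trans (norm_sub_le _ _) ?_
          gcongr
          refine le_trans (norm_sub_le _ _) ?_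
          gcongr
          exact norm_sub_le _ _
      _ ≤ 16 := by
          rw [norm_mul, norm_mul]
          have : ‖(4:ℂ)‖ = 4 := by norm_num
          rw [this]
          nlinarith [norm_nonneg ((F : ℤ×ℤ→ℂ) k), hx8, b0, b1, b2, b3, b4,
            norm_nonneg ((x:ℂ))]
  -- norm of G squared
  have hGnorm : ‖G‖^2 ≤ 256 * ((16*M+24 : ℕ):ℝ) := by
    have h1 := lp.norm_rpow_eq_tsum tr2pos G
    simp only [rp2] at h1
    have h2 : ∑' k, ‖(G : ℤ×ℤ→ℂ) k‖^2 = ∑ k ∈ S, ‖(G : ℤ×ℤ→ℂ) k‖^2 := by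
      refine tsum_eq_sum ?_
      intro k hk
      rw [hzero k hk]
      simp
    have h3 : ∑ k ∈ S, ‖(G : ℤ×ℤ→ℂ) k‖^2 ≤ (S.card : ℝ) * 256 := by
      rw [← nsmul_eq_mul]
      refine Finset.sum_le_card_nsmul _ _ _ ?_
      intro k _
      have := hGb k
      nlinarith [norm_nonneg ((G : ℤ×ℤ→ℂ) k)]
    have hcard : S.card = 16*M+24 := by
      rw [hS, Finset.card_sdiff_of_subset (by
        intro k hk
        rw [mem_box] at *
        omega)]
      rw [card_box, card_box]
      have : (2*(M+2)+1)^2 = (2*M+1)^2 + (16*M+24) := by ring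
      omega
    rw [h1, h2]
    rw [hcard] at h3
    linarith [h3]
  -- norm of F squared from below
  have hFnorm : ((2*(M+1)+1 : ℕ) : ℝ)^2 ≤ ‖F‖^2 := by
    have h1 := lp.sum_rpow_le_norm_rpow tr2pos F (box (M+1))
    simp only [rp2] at h1
    have h2 : ∑ k ∈ box (M+1), ‖(F : ℤ×ℤ→ℂ) k‖^2 = ((box (M+1)).card : ℝ) := by
      rw [Finset.sum_congr rfl (fun k hk => by rw [hF, Fel_apply, if_pos hk, wave_norm, one_pow]),
        Finset.sum_const, nsmul_eq_mul, mul_one]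
    rw [h2] at h1
    rw [card_box] at h1
    push_cast at h1 ⊢
    linarith
  -- link
  have hlink : ‖F‖ ≤ ‖(↑u⁻¹ : Hs →L[ℂ] Hs)‖ * ‖G‖ := by
    have : (↑u⁻¹ : Hs →L[ℂ] Hs) G = F := by
      rw [hG, ← ContinuousLinearMap.mul_apply, u.inv_mul, ContinuousLinearMap.one_apply]
    calc ‖F‖ = ‖(↑u⁻¹ : Hs →L[ℂ] Hs) G‖ := by rw [this]
      _ ≤ ‖(↑u⁻¹ : Hs →L[ℂ] Hs)‖ * ‖G‖ := ContinuousLinearMap.le_opNorm _ _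
  have hsq : ‖F‖^2 ≤ ‖(↑u⁻¹ : Hs →L[ℂ] Hs)‖^2 * ‖G‖^2 := by
    rw [← mul_pow]
    exact pow_le_pow_left₀ (norm_nonneg _) hlink 2
  calc ((2*(M+1)+1 : ℕ) : ℝ)^2 ≤ ‖F‖^2 := hFnorm
    _ ≤ ‖(↑u⁻¹ : Hs →L[ℂ] Hs)‖^2 * ‖G‖^2 := hsq
    _ ≤ ‖(↑u⁻¹ : Hs →L[ℂ] Hs)‖^2 * (256 * ((16*M+24 : ℕ):ℝ)) := by
        refine mul_le_mul_of_nonneg_left hGnorm (by positivity)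
    _ = ‖(↑u⁻¹ : Hs →L[ℂ] Hs)‖^2 * 256 * ((16*M+24 : ℕ):ℝ) := by ring


lemma mem_spec (Δ₀ : Hs →L[ℂ] Hs)
    (hΔ : ∀ f : Hs, ∀ m : ℤ × ℤ,
      (Δ₀ f) m = 4 * f m - f (m + (1, 0)) - f (m - (1, 0))
        - f (m + (0, 1)) - f (m - (0, 1)))
    {x : ℝ} (hx : x ∈ Set.Icc (0:ℝ) 8) : (x:ℂ) ∈ spectrum ℂ Δ₀ := by
  by_contra hnot
  rw [spectrum.notMem_iff] at hnot
  obtain ⟨u, hu⟩ := hnot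
  set C := ‖(↑u⁻¹ : Hs →L[ℂ] Hs)‖ with hC
  have hC0 : 0 ≤ C := norm_nonneg _
  obtain ⟨M, hM⟩ := exists_nat_gt (4200 * (C^2 + 1))
  have key := main_est Δ₀ hΔ hx u hu M
  rw [← hC] at key
  have c1 : ((2*(M+1)+1 : ℕ) : ℝ) = 2*(M:ℝ) + 3 := by push_cast; ring
  have c2 : ((16*M+24 : ℕ) : ℝ) = 16*(M:ℝ) + 24 := by push_cast; ring
  rw [c1, c2] at key
  have hM0 : (0:ℝ) ≤ (M:ℝ) := Nat.cast_nonneg M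
  nlinarith [key, hM, hM0, sq_nonneg C, mul_le_mul_of_nonneg_left (le_of_lt hM) hM0,
    mul_le_mul_of_nonneg_left (le_of_lt hM) (mul_nonneg hC0 hC0)]


end SqLatticeAux

end

/-- The spectrum of the Laplacian `Δ₀` on the square lattice `ℤ²`, given by
`(Δ₀ f)(m) = 4 f(m) − f(m+(1,0)) − f(m−(1,0)) − f(m+(0,1)) − f(m−(0,1))`,
equals the real interval `[0, 8]` viewed as a subset of `ℂ`. -/
theorem spectrum_laplacian_square_lattice
    (Δ₀ : lp (fun _ : ℤ × ℤ => ℂ) 2 →L[ℂ] lp (fun _ : ℤ × ℤ => ℂ) 2)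
    (hsa : IsSelfAdjoint Δ₀)
    (hΔ : ∀ f : lp (fun _ : ℤ × ℤ => ℂ) 2, ∀ m : ℤ × ℤ,
      (Δ₀ f) m = 4 * f m - f (m + (1, 0)) - f (m - (1, 0))
        - f (m + (0, 1)) - f (m - (0, 1))) :
    spectrum ℂ Δ₀ = (fun x : ℝ => (x : ℂ)) '' Set.Icc 0 8 := by
  apply Set.Subset.antisymm
  · exact SqLatticeAux.spec_subset Δ₀ hsa hΔ
  · rintro z ⟨x, hx, rfl⟩
    exact SqLatticeAux.mem_spec Δ₀ hΔ hx
end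

section
/- Let Q be a nonzero real number and let T_Q be the bounded self-adjoint operator on ℓ²(ℤ) given by (T_Q f)(n) = 2 f(n) − f(n+1) − f(n−1) + (if n = 0 then Q · f(0) else 0), i.e., T_Q = h + Q·⟨δ₀, ·⟩δ₀ where δ₀ is the indicator of 0. Then T_Q has exactly one eigenvalue: the set of eigenvalues (the point spectrum) of T_Q equals {2 + √(4 + Q²)} if Q > 0, and equals {2 − √(4 + Q²)} if Q < 0. -/
open Filter

private lemma coef_zero {c w : ℂ} (hw : 1 ≤ ‖w‖)
    (h : Tendsto (fun n : ℕ => c * w ^ n) atTop (nhds 0)) : c = 0 := by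
  have h2 : Tendsto (fun n : ℕ => ‖c * w ^ n‖) atTop (nhds 0) := by
    have := (continuous_norm.tendsto 0).comp h
    simpa only [Function.comp_def, norm_zero] using this
  have hle : ∀ n : ℕ, ‖c‖ ≤ ‖c * w ^ n‖ := by
    intro n
    rw [norm_mul, norm_pow]
    nlinarith [one_le_pow₀ hw (n := n), norm_nonneg c, pow_nonneg (norm_nonneg w) n]
  have h0 : ‖c‖ ≤ 0 := ge_of_tendsto h2 (Eventually.of_forall hle)
  have h1 := norm_nonneg c
  simpa using le_antisymm h0 h1

private lemma exists_sq' (z : ℂ) : ∃ w : ℂ, w ^ 2 = z :=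
  IsAlgClosed.exists_pow_nat_eq z two_pos

private lemma shift_geom {t r r' : ℂ} (hsum : r + r' = t) (hprod : r * r' = 1)
    (a : ℕ → ℂ) (hrec : ∀ n, a (n + 2) = t * a (n + 1) - a n) :
    ∀ n, a (n + 1) - r * a n = (a 1 - r * a 0) * r' ^ n := by
  intro n
  induction n with
  | zero => simp
  | succ m ih =>
    have h2 := hrec m
    have : a (m + 2) - r * a (m + 1) = r' * (a (m + 1) - r * a m) := by
      rw [h2, ← hsum]; ring_nf; rw [show r * r' = 1 from hprod] <;> ring
    rw [this, ih]; ring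

private lemma rec_solution (t : ℂ) (a : ℕ → ℂ)
    (hrec : ∀ n, a (n + 2) = t * a (n + 1) - a n)
    (hlim : Tendsto a atTop (nhds 0)) :
    ∃ r : ℂ, r * (t - r) = 1 ∧ (∀ n, a n = a 0 * r ^ n) ∧ (a 0 ≠ 0 → ‖r‖ < 1) := by
  obtain ⟨d, hd⟩ := exists_sq' (t ^ 2 - 4)
  -- roots (t ± d)/2
  have key : ∀ r r' : ℂ, r + r' = t → r * r' = 1 → 1 ≤ ‖r'‖ →
      (∀ n, a n = a 0 * r ^ n) := by
    intro r r' hsum hprod hr'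
    have hb : ∀ n, a (n + 1) - r * a n = (a 1 - r * a 0) * r' ^ n :=
      shift_geom hsum hprod a hrec
    have hlim1 : Tendsto (fun n => a (n + 1)) atTop (nhds 0) :=
      hlim.comp (tendsto_add_atTop_nat 1)
    have hlim2 : Tendsto (fun n => a (n + 1) - r * a n) atTop (nhds 0) := by
      simpa using hlim1.sub ((hlim.const_mul r))
    have hc : a 1 - r * a 0 = 0 := by
      apply coef_zero hr'
      apply hlim2.congr
      intro n; exact hb n
    intro n
    induction n with
    | zero => simp
    | succ m ih =>
      have := hb m
      rw [hc, zero_mul, sub_eq_zero] at this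
      rw [this, ih]; ring
  set r0 : ℂ := (t + d) / 2 with hr0
  set r1 : ℂ := (t - d) / 2 with hr1
  have hsum : r0 + r1 = t := by rw [hr0, hr1]; ring
  have hprod : r0 * r1 = 1 := by
    rw [hr0, hr1]
    have : t ^ 2 - d ^ 2 = 4 := by rw [hd]; ring
    field_simp
    linear_combination this
  have habs : ‖r0‖ * ‖r1‖ = 1 := by
    rw [← norm_mul, hprod, norm_one]
  have hone : 1 ≤ ‖r0‖ ∨ 1 ≤ ‖r1‖ := by
    by_contra hcon
    push_neg at hcon
    nlinarith [hcon.1, hcon.2, norm_nonneg r0, norm_nonneg r1]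
  -- pick the small root
  rcases hone with h1 | h1
  · refine ⟨r1, ?_, key r1 r0 (by rw [← hsum]; ring) (by rw [← hprod]; ring) h1, ?_⟩
    · rw [show t - r1 = r0 by rw [← hsum]; ring, mul_comm]; exact hprod
    · intro ha0
      by_contra hge
      push_neg at hge
      have := key r1 r0 (by rw [← hsum]; ring) (by rw [← hprod]; ring) h1
      have hlim' : Tendsto (fun n => a 0 * r1 ^ n) atTop (nhds 0) :=
        hlim.congr (fun n => this n)
      exact ha0 (coef_zero hge hlim')
  · refine ⟨r0, ?_, key r0 r1 hsum hprod h1, ?_⟩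
    · rw [show t - r0 = r1 by rw [← hsum]; ring]; exact hprod
    · intro ha0
      by_contra hge
      push_neg at hge
      have := key r0 r1 hsum hprod h1
      have hlim' : Tendsto (fun n => a 0 * r0 ^ n) atTop (nhds 0) :=
        hlim.congr (fun n => this n)
      exact ha0 (coef_zero hge hlim')

private lemma lp_tendsto_cofinite (f : lp (fun _ : ℤ => ℂ) 2) :
    Tendsto (fun n : ℤ => (f : ∀ _ : ℤ, ℂ) n) cofinite (nhds 0) := by
  have h2 : (0:ℝ) < (2 : ENNReal).toReal := by norm_num
  have hs := (lp.memℓp f).summable h2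
  have h0 : Tendsto (fun i : ℤ => ‖(f : ∀ _ : ℤ, ℂ) i‖ ^ (2 : ENNReal).toReal)
      cofinite (nhds 0) := hs.tendsto_cofinite_zero
  have h1 : Tendsto (fun i : ℤ => ‖(f : ∀ _ : ℤ, ℂ) i‖) cofinite (nhds 0) := by
    have := (Real.continuous_sqrt.tendsto 0).comp h0
    simp only [Function.comp_def, Real.sqrt_zero] at this
    apply this.congr
    intro i
    rw [show (2 : ENNReal).toReal = (2:ℝ) by norm_num, Real.rpow_two,
      Real.sqrt_sq (norm_nonneg _)]
  exact tendsto_zero_iff_norm_tendsto_zero.mpr h1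

private lemma lp_tendsto_pos (f : lp (fun _ : ℤ => ℂ) 2) :
    Tendsto (fun n : ℕ => (f : ∀ _ : ℤ, ℂ) n) atTop (nhds 0) := by
  refine (lp_tendsto_cofinite f).comp ?_
  rw [← Nat.cofinite_eq_atTop]
  exact Function.Injective.tendsto_cofinite (fun a b h => by exact_mod_cast h)

private lemma lp_tendsto_neg (f : lp (fun _ : ℤ => ℂ) 2) :
    Tendsto (fun n : ℕ => (f : ∀ _ : ℤ, ℂ) (-n)) atTop (nhds 0) := by
  refine (lp_tendsto_cofinite f).comp ?_
  rw [← Nat.cofinite_eq_atTop]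
  exact Function.Injective.tendsto_cofinite (fun a b h => by
    simpa using neg_injective h)

private lemma forward_dir (Q : ℝ)
    (T : lp (fun _ : ℤ => ℂ) 2 →L[ℂ] lp (fun _ : ℤ => ℂ) 2)
    (hT : ∀ f : lp (fun _ : ℤ => ℂ) 2, ∀ n : ℤ,
      (T f) n = 2 * f n - f (n + 1) - f (n - 1)
        + (if n = 0 then (Q : ℂ) * f 0 else 0))
    (z : ℂ) (f : lp (fun _ : ℤ => ℂ) 2) (hf : f ≠ 0) (heig : T f = z • f) :
    ∃ r : ℂ, r ^ 2 - Q * r - 1 = 0 ∧ ‖r‖ < 1 ∧ z = 2 + Q - 2 * r := by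
  have heq : ∀ n : ℤ, z * f n = 2 * f n - f (n + 1) - f (n - 1)
      + (if n = 0 then (Q : ℂ) * f 0 else 0) := by
    intro n
    rw [← hT f n, heig, lp.coeFn_smul, Pi.smul_apply, smul_eq_mul]
  set t : ℂ := 2 - z with ht
  -- right half
  set a : ℕ → ℂ := fun m => f (m : ℤ) with ha
  have harec : ∀ m : ℕ, a (m + 2) = t * a (m + 1) - a m := by
    intro m
    have h := heq ((m : ℤ) + 1)
    rw [if_neg (by omega)] at h
    have e1 : ((m : ℤ) + 1 + 1) = ((m + 2 : ℕ) : ℤ) := by push_cast; ring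
    have e2 : ((m : ℤ) + 1 - 1) = ((m : ℕ) : ℤ) := by push_cast; ring
    have e3 : ((m : ℤ) + 1) = ((m + 1 : ℕ) : ℤ) := by push_cast; ring
    rw [e1, e2, e3] at h
    simp only [ha, ht]
    linear_combination h
  set b : ℕ → ℂ := fun m => f (-(m : ℤ)) with hb
  have hbrec : ∀ m : ℕ, b (m + 2) = t * b (m + 1) - b m := by
    intro m
    have h := heq (-((m : ℤ) + 1))
    rw [if_neg (by omega)] at h
    have e1 : (-((m : ℤ) + 1) + 1) = -((m : ℕ) : ℤ) := by push_cast; ring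
    have e2 : (-((m : ℤ) + 1) - 1) = -((m + 2 : ℕ) : ℤ) := by push_cast; ring
    have e3 : (-((m : ℤ) + 1)) = -((m + 1 : ℕ) : ℤ) := by push_cast; ring
    rw [e1, e2, e3] at h
    simp only [hb, ht]
    linear_combination h
  obtain ⟨r, hr1, hr2, hr3⟩ := rec_solution t a harec (lp_tendsto_pos f)
  obtain ⟨s, hs1, hs2, hs3⟩ := rec_solution t b hbrec (lp_tendsto_neg f)
  have hab0 : a 0 = b 0 := by simp [ha, hb]
  -- f 0 ≠ 0
  have hf0 : a 0 ≠ 0 := by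
    intro h0
    apply hf
    apply lp.ext
    funext n
    rcases Int.natAbs_eq n with hn | hn
    · rw [hn]
      have h1 := hr2 n.natAbs
      rw [h0, zero_mul] at h1
      exact h1
    · rw [hn]
      have h1 := hs2 n.natAbs
      rw [← hab0, h0, zero_mul] at h1
      exact h1
  have hrabs := hr3 hf0
  have hsabs := hs3 (hab0 ▸ hf0)
  -- s = r
  have hseq : s = r := by
    have hroot : (s - r) * (s - (t - r)) = 0 := by
      linear_combination hr1 - hs1
    rcases mul_eq_zero.mp hroot with h | h
    · exact sub_eq_zero.mp h
    · exfalso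
      have hst : s = t - r := sub_eq_zero.mp h
      have : ‖r‖ * ‖s‖ = 1 := by
        rw [← norm_mul, hst]
        rw [show r * (t - r) = 1 from hr1, norm_one]
      nlinarith [norm_nonneg r, norm_nonneg s]
  -- jump condition at 0
  have h0 := heq 0
  rw [if_pos rfl] at h0
  have hfr : f (0 + 1 : ℤ) = a 0 * r := by
    have e : (0 + 1 : ℤ) = ((1 : ℕ) : ℤ) := by norm_num
    rw [e]
    have h1 := hr2 1
    rw [pow_one] at h1
    exact h1
  have hfl : f (0 - 1 : ℤ) = a 0 * s := by
    have e : (0 - 1 : ℤ) = -((1 : ℕ) : ℤ) := by norm_num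
    rw [e]
    have h1 := hs2 1
    rw [← hab0, pow_one] at h1
    exact h1
  have hz : z = 2 + Q - 2 * r := by
    have h0' : z * a 0 = 2 * a 0 - a 0 * r - a 0 * s + Q * a 0 := by
      have e0 : a 0 = f (0 : ℤ) := by simp [ha]
      rw [← hfr, ← hfl, e0]
      exact h0
    rw [hseq] at h0'
    have hcan : z * a 0 = (2 + (Q : ℂ) - 2 * r) * a 0 := by linear_combination h0'
    exact mul_right_cancel₀ hf0 hcan
  refine ⟨r, ?_, hrabs, hz⟩
  have htr : t = 2 * r - Q := by rw [ht, hz]; ring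
  rw [htr] at hr1
  linear_combination hr1

private lemma backward_dir (Q r : ℝ) (hr : |r| < 1) (hroot : r ^ 2 - Q * r - 1 = 0)
    (z : ℂ) (hz : z = 2 + Q - 2 * r)
    (T : lp (fun _ : ℤ => ℂ) 2 →L[ℂ] lp (fun _ : ℤ => ℂ) 2)
    (hT : ∀ f : lp (fun _ : ℤ => ℂ) 2, ∀ n : ℤ,
      (T f) n = 2 * f n - f (n + 1) - f (n - 1)
        + (if n = 0 then (Q : ℂ) * f 0 else 0)) :
    ∃ f : lp (fun _ : ℤ => ℂ) 2, f ≠ 0 ∧ T f = z • f := by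
  set g : ∀ _ : ℤ, ℂ := fun n => (r : ℂ) ^ n.natAbs with hg
  have hmem : Memℓp g 2 := by
    apply memℓp_gen
    have he : ∀ n : ℤ, ‖g n‖ ^ (2 : ENNReal).toReal = (r ^ 2) ^ n.natAbs := by
      intro n
      rw [show (2 : ENNReal).toReal = (2 : ℝ) by norm_num, Real.rpow_two]
      have h1 : ‖g n‖ = |r| ^ n.natAbs := by
        rw [hg]
        simp [norm_pow, Complex.norm_real, Real.norm_eq_abs]
      rw [h1, ← pow_mul, mul_comm, pow_mul, sq_abs]
    rw [funext he]
    have hgeo : Summable (fun m : ℕ => (r ^ 2) ^ m) :=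
      summable_geometric_of_lt_one (by positivity)
        (by nlinarith [sq_abs r, abs_nonneg r])
    apply Summable.of_nat_of_neg
    · exact hgeo.congr (fun n => by simp)
    · exact hgeo.congr (fun n => by simp)
  set f : lp (fun _ : ℤ => ℂ) 2 := ⟨g, hmem⟩ with hf
  have hfn : ∀ n : ℤ, (f : ∀ _ : ℤ, ℂ) n = (r : ℂ) ^ n.natAbs := fun n => rfl
  have hrc : (r : ℂ) ^ 2 - (Q : ℂ) * r - 1 = 0 := by
    have := congrArg (fun x : ℝ => (x : ℂ)) hroot
    push_cast at this
    simpa using this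
  refine ⟨f, ?_, ?_⟩
  · intro h0
    have : (f : ∀ _ : ℤ, ℂ) 0 = 0 := by rw [h0]; simp [lp.coeFn_zero]
    rw [hfn 0] at this
    simp at this
  · apply lp.ext
    funext n
    rw [hT f n, lp.coeFn_smul, Pi.smul_apply, smul_eq_mul]
    rcases (by omega : n = 0 ∨ 1 ≤ n ∨ n ≤ -1) with h | h | h
    · subst h
      rw [if_pos rfl]
      rw [hfn 0, hfn (0 - 1), hfn (0 + 1)]
      norm_num
      rw [hz]; ring
    · rw [if_neg (by omega)]
      obtain ⟨k, hk⟩ : ∃ k : ℕ, n = (k : ℤ) + 1 := ⟨(n - 1).toNat, by omega⟩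
      rw [hfn n, hfn (n + 1), hfn (n - 1),
        show (n + 1).natAbs = k + 2 by omega,
        show (n - 1).natAbs = k by omega,
        show n.natAbs = k + 1 by omega]
      rw [hz]
      ring_nf
      linear_combination ((r : ℂ) ^ k) * hrc
    · rw [if_neg (by omega)]
      obtain ⟨k, hk⟩ : ∃ k : ℕ, n = -((k : ℤ) + 1) := ⟨(-n - 1).toNat, by omega⟩
      rw [hfn n, hfn (n + 1), hfn (n - 1),
        show (n + 1).natAbs = k by omega,
        show (n - 1).natAbs = k + 2 by omega,
        show n.natAbs = k + 1 by omega]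
      rw [hz]
      ring_nf
      linear_combination ((r : ℂ) ^ k) * hrc
/-- Let `Q ≠ 0` be real and let `T_Q` be the bounded self-adjoint operator on `ℓ²(ℤ)`
given by `(T_Q f)(n) = 2 f(n) − f(n+1) − f(n−1) + (if n = 0 then Q f(0) else 0)`,
i.e. `T_Q = h + Q ⟨δ₀, ·⟩ δ₀`.  Then `T_Q` has exactly one eigenvalue: its point
spectrum equals `{2 + √(4 + Q²)}` if `Q > 0`, and `{2 − √(4 + Q²)}` if `Q < 0`. -/
theorem point_spectrum_laplacian_delta_potential
    (Q : ℝ) (hQ : Q ≠ 0)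
    (T : lp (fun _ : ℤ => ℂ) 2 →L[ℂ] lp (fun _ : ℤ => ℂ) 2)
    (hsa : IsSelfAdjoint T)
    (hT : ∀ f : lp (fun _ : ℤ => ℂ) 2, ∀ n : ℤ,
      (T f) n = 2 * f n - f (n + 1) - f (n - 1)
        + (if n = 0 then (Q : ℂ) * f 0 else 0)) :
    (0 < Q →
      {z : ℂ | ∃ f : lp (fun _ : ℤ => ℂ) 2, f ≠ 0 ∧ T f = z • f}
        = {((2 + Real.sqrt (4 + Q ^ 2) : ℝ) : ℂ)}) ∧
    (Q < 0 →
      {z : ℂ | ∃ f : lp (fun _ : ℤ => ℂ) 2, f ≠ 0 ∧ T f = z • f}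
        = {((2 - Real.sqrt (4 + Q ^ 2) : ℝ) : ℂ)}) := by
  set w : ℝ := Real.sqrt (4 + Q ^ 2) with hwdef
  have hw : w ^ 2 = 4 + Q ^ 2 := Real.sq_sqrt (by positivity)
  have hw0 : 0 ≤ w := Real.sqrt_nonneg _
  have hw2 : 2 < w := by nlinarith [sq_pos_of_ne_zero hQ]
  have hwc : ((w : ℂ)) ^ 2 = 4 + (Q : ℂ) ^ 2 := by
    have := congrArg (fun x : ℝ => (x : ℂ)) hw
    push_cast at this
    exact this
  constructor
  · -- Q > 0
    intro hQpos
    have hQw : Q < w := by nlinarith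
    ext z
    simp only [Set.mem_setOf_eq, Set.mem_singleton_iff]
    constructor
    · rintro ⟨f, hf, heig⟩
      obtain ⟨r, hroot, habs, hzeq⟩ := forward_dir Q T hT z f hf heig
      have hfac : (r - ((Q : ℂ) - w) / 2) * (r - ((Q : ℂ) + w) / 2) = 0 := by
        linear_combination hroot - hwc / 4
      rcases mul_eq_zero.mp hfac with h | h
      · rw [sub_eq_zero] at h
        rw [hzeq, h]
        push_cast
        ring
      · exfalso
        rw [sub_eq_zero] at h
        have he : ((Q : ℂ) + w) / 2 = (((Q + w) / 2 : ℝ) : ℂ) := by push_cast; ring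
        rw [h, he, Complex.norm_real, Real.norm_eq_abs] at habs
        nlinarith [le_abs_self ((Q + w) / 2)]
    · intro hz
      exact backward_dir Q ((Q - w) / 2)
        (abs_lt.mpr ⟨by nlinarith, by nlinarith⟩)
        (by linear_combination hw / 4)
        z (by rw [hz]; push_cast; ring) T hT
  · -- Q < 0
    intro hQneg
    have hQw : -Q < w := by nlinarith
    ext z
    simp only [Set.mem_setOf_eq, Set.mem_singleton_iff]
    constructor
    · rintro ⟨f, hf, heig⟩
      obtain ⟨r, hroot, habs, hzeq⟩ := forward_dir Q T hT z f hf heig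
      have hfac : (r - ((Q : ℂ) - w) / 2) * (r - ((Q : ℂ) + w) / 2) = 0 := by
        linear_combination hroot - hwc / 4
      rcases mul_eq_zero.mp hfac with h | h
      · exfalso
        rw [sub_eq_zero] at h
        have he : ((Q : ℂ) - w) / 2 = (((Q - w) / 2 : ℝ) : ℂ) := by push_cast; ring
        rw [h, he, Complex.norm_real, Real.norm_eq_abs] at habs
        nlinarith [neg_abs_le ((Q - w) / 2)]
      · rw [sub_eq_zero] at h
        rw [hzeq, h]
        push_cast
        ring
    · intro hz
      exact backward_dir Q ((Q + w) / 2)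
        (abs_lt.mpr ⟨by nlinarith, by nlinarith⟩)
        (by linear_combination hw / 4)
        z (by rw [hz]; push_cast; ring) T hT
end

section
/- Let p ≥ 2 be a natural number, let V = (ℤ × ℤ) ⊕ (ℤ × Fin p), and let Δ be the bounded self-adjoint operator on ℓ²(V) (the Laplacian of the square lattice with p pendant edges attached at each vertex of ℤ × {0}) defined by: for u = inl (m₁, m₂) with m₂ ≠ 0, (Δ F)(u) = 4 F(inl(m₁,m₂)) − F(inl(m₁+1,m₂)) − F(inl(m₁−1,m₂)) − F(inl(m₁,m₂+1)) − F(inl(m₁,m₂−1)); for u = inl (m₁, 0), (Δ F)(u) = (4 + p) F(inl(m₁,0)) − F(inl(m₁+1,0)) − F(inl(m₁−1,0)) − F(inl(m₁,1)) − F(inl(m₁,−1)) − Σ_{j < p} F(inr(m₁,j)); and for u = inr (n, j), (Δ F)(u) = F(inr(n,j)) − F(inl(n,0)). Then 1 is an eigenvalue of Δ of infinite multiplicity, i.e., the eigenspace {F ∈ ℓ²(V) : Δ F = F} is an infinite-dimensional subspace. -/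
open Sum

theorem lp_single_apply' {α : Type*} [DecidableEq α] (q : ENNReal) (i j : α) (a : ℂ) :
    (lp.single (E := fun _ : α => ℂ) q i a) j = if j = i then a else 0 := by
  by_cases h : j = i
  · subst h; simp [lp.single_apply_self]
  · simp [lp.single_apply_ne _ _ _ h, h]

/-- Let `p ≥ 2`, `V = (ℤ × ℤ) ⊕ (ℤ × Fin p)`, and let `Δ` be the Laplacian of the
square lattice with `p` pendant edges attached at each vertex of `ℤ × {0}` (defined
pointwise as in the hypotheses).  Then `1` is an eigenvalue of `Δ` of infinite
multiplicity: the eigenspace `{F : Δ F = F}` is infinite-dimensional. -/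
theorem flat_band_pendant_star_guide
    (p : ℕ) (hp : 2 ≤ p)
    (Δ : lp (fun _ : (ℤ × ℤ) ⊕ (ℤ × Fin p) => ℂ) 2 →L[ℂ]
         lp (fun _ : (ℤ × ℤ) ⊕ (ℤ × Fin p) => ℂ) 2)
    (hsa : IsSelfAdjoint Δ)
    (h1 : ∀ F : lp (fun _ : (ℤ × ℤ) ⊕ (ℤ × Fin p) => ℂ) 2, ∀ m₁ m₂ : ℤ, m₂ ≠ 0 →
      (Δ F) (inl (m₁, m₂)) = 4 * F (inl (m₁, m₂)) - F (inl (m₁ + 1, m₂))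
        - F (inl (m₁ - 1, m₂)) - F (inl (m₁, m₂ + 1)) - F (inl (m₁, m₂ - 1)))
    (h2 : ∀ F : lp (fun _ : (ℤ × ℤ) ⊕ (ℤ × Fin p) => ℂ) 2, ∀ m₁ : ℤ,
      (Δ F) (inl (m₁, 0)) = (4 + (p : ℂ)) * F (inl (m₁, 0)) - F (inl (m₁ + 1, 0))
        - F (inl (m₁ - 1, 0)) - F (inl (m₁, 1)) - F (inl (m₁, -1))
        - ∑ j : Fin p, F (inr (m₁, j)))
    (h3 : ∀ F : lp (fun _ : (ℤ × ℤ) ⊕ (ℤ × Fin p) => ℂ) 2, ∀ n : ℤ, ∀ j : Fin p,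
      (Δ F) (inr (n, j)) = F (inr (n, j)) - F (inl (n, 0))) :
    ¬ FiniteDimensional ℂ ↥(LinearMap.ker (Δ - 1 : _ →L[ℂ] _).toLinearMap) := by
  intro hfd
  have h0p : (0 : ℕ) < p := by omega
  have h1p : (1 : ℕ) < p := by omega
  set j0 : Fin p := ⟨0, h0p⟩ with hj0
  set j1 : Fin p := ⟨1, h1p⟩ with hj1
  have hj01 : j0 ≠ j1 := by
    intro h; rw [Fin.ext_iff] at h; simp [hj0, hj1] at h
  set F : ℤ → lp (fun _ : (ℤ × ℤ) ⊕ (ℤ × Fin p) => ℂ) 2 := fun n =>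
    lp.single 2 (inr (n, j0)) 1 - lp.single 2 (inr (n, j1)) 1 with hF
  have hFval : ∀ n : ℤ, ∀ x : (ℤ × ℤ) ⊕ (ℤ × Fin p),
      (F n) x = (if x = inr (n, j0) then (1:ℂ) else 0)
              - (if x = inr (n, j1) then (1:ℂ) else 0) := by
    intro n x
    have : (F n) x = (lp.single 2 (inr (n, j0)) (1:ℂ) :
          lp (fun _ : (ℤ × ℤ) ⊕ (ℤ × Fin p) => ℂ) 2) x
        - (lp.single 2 (inr (n, j1)) (1:ℂ) :
          lp (fun _ : (ℤ × ℤ) ⊕ (ℤ × Fin p) => ℂ) 2) x := rfl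
    rw [this, lp_single_apply', lp_single_apply']
  have hker : ∀ n : ℤ, F n ∈ LinearMap.ker (Δ - 1 : _ →L[ℂ] _).toLinearMap := by
    intro n
    rw [LinearMap.mem_ker]
    have hΔ : Δ (F n) = F n := by
      ext x
      rcases x with ⟨m₁, m₂⟩ | ⟨k, j⟩
      · by_cases hm : m₂ = 0
        · subst hm
          rw [h2 (F n) m₁]
          have hsum : ∑ j : Fin p, (F n) (inr (m₁, j)) = 0 := by
            by_cases hm1 : m₁ = n
            · subst hm1
              simp [hFval, Finset.sum_sub_distrib]
            · apply Finset.sum_eq_zero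
              intro j _
              simp [hFval, hm1]
          rw [hsum]
          simp [hFval]
        · rw [h1 (F n) m₁ m₂ hm]
          simp [hFval]
      · rw [h3 (F n) k j]
        simp [hFval]
    have : (Δ - 1 : _ →L[ℂ] _).toLinearMap (F n) = Δ (F n) - F n := rfl
    rw [this, hΔ, sub_self]
  -- linear independence
  have hli : LinearIndependent ℂ F := by
    rw [linearIndependent_iff']
    intro s g hg n hn
    have := congrArg (fun f : lp (fun _ : (ℤ × ℤ) ⊕ (ℤ × Fin p) => ℂ) 2 =>
      f (inr (n, j0))) hg
    simp only at this
    have hcoe : ((∑ i ∈ s, g i • F i :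
        lp (fun _ : (ℤ × ℤ) ⊕ (ℤ × Fin p) => ℂ) 2) : ∀ _, ℂ) (inr (n, j0))
        = ∑ i ∈ s, g i * (F i) (inr (n, j0)) := by
      rw [lp.coeFn_sum]
      simp [Finset.sum_apply]
    rw [hcoe] at this
    have hval : ∀ i : ℤ, (F i) (inr (n, j0)) = if i = n then (1:ℂ) else 0 := by
      intro i
      rw [hFval]
      by_cases h : i = n
      · subst h; simp [hj01]
      · have : (inr (n, j0) : (ℤ × ℤ) ⊕ (ℤ × Fin p)) ≠ inr (i, j0) := by
          simp [Ne.symm h]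
        have h2' : (inr (n, j0) : (ℤ × ℤ) ⊕ (ℤ × Fin p)) ≠ inr (i, j1) := by
          simp [Ne.symm h]
        simp [this, h2', h]
    have hsum2 : ∑ i ∈ s, g i * (F i) (inr (n, j0)) = g n := by
      rw [Finset.sum_congr rfl (fun i _ => by rw [hval i])]
      simp [mul_ite, Finset.sum_ite_eq', hn]
    rw [hsum2] at this
    exact this
  -- contradiction with finite-dimensionality
  have hli' : LinearIndependent ℂ (fun n : ℤ =>
      (⟨F n, hker n⟩ : LinearMap.ker (Δ - 1 : _ →L[ℂ] _).toLinearMap)) := by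
    apply LinearIndependent.of_comp (LinearMap.ker (Δ - 1 : _ →L[ℂ] _).toLinearMap).subtype
    exact hli
  have : Finite ℤ := hli'.finite
  exact not_finite ℤ
end

section
/- Let p ≥ 1 be a natural number, define Q(λ) = p·λ/(λ − 1) for real λ > 1, and let S_p = { λ ∈ ℝ : λ > 1 and 2 ≤ λ − √(4 + Q(λ)²) ≤ 6 }. Then there exist real numbers a ≤ b with S_p = [a, b], the length satisfies b − a < 4, and [a, b] ⊆ [p + 3, p + 8]. Moreover, the length of S_p tends to 4: (sSup S_p − sInf S_p) → 4 as p → ∞. -/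
open Filter

noncomputable section GuidedBand

/-- The set appearing in the theorem. -/
def Sset (p : ℕ) : Set ℝ :=
  {x : ℝ | 1 < x ∧ 2 ≤ x - Real.sqrt (4 + ((p : ℝ) * x / (x - 1)) ^ 2) ∧
    x - Real.sqrt (4 + ((p : ℝ) * x / (x - 1)) ^ 2) ≤ 6}

lemma mem_Sset_iff (p : ℕ) (hp : 1 ≤ p) (x : ℝ) :
    x ∈ Sset p ↔ 1 < x ∧ (p : ℝ) ^ 2 * x ≤ (x - 4) * (x - 1) ^ 2 ∧
      (x ≤ 6 ∨ (x - 4) * (x - 8) * (x - 1) ^ 2 ≤ (p : ℝ) ^ 2 * x ^ 2) := by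
  have hq1 : (1 : ℝ) ≤ (p : ℝ) := by exact_mod_cast hp
  set q : ℝ := (p : ℝ) with hq
  constructor
  · rintro ⟨hx1, h2, h6⟩
    have hx1' : (0 : ℝ) < x - 1 := by linarith
    have hrw : 4 + (q * x / (x - 1)) ^ 2 = (4 * (x - 1) ^ 2 + (q * x) ^ 2) / (x - 1) ^ 2 := by
      field_simp
    rw [hrw] at h2 h6
    have hs : Real.sqrt ((4 * (x - 1) ^ 2 + (q * x) ^ 2) / (x - 1) ^ 2) ≤ x - 2 := by
      linarith
    have hs2 := (Real.sqrt_le_iff.mp hs).2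
    have hpos : (0 : ℝ) < (x - 1) ^ 2 := by positivity
    have hpoly : 4 * (x - 1) ^ 2 + (q * x) ^ 2 ≤ (x - 2) ^ 2 * (x - 1) ^ 2 :=
      (div_le_iff₀ hpos).mp hs2
    have hA : q ^ 2 * x ≤ (x - 4) * (x - 1) ^ 2 := by nlinarith [hpoly, hx1']
    refine ⟨hx1, hA, ?_⟩
    by_cases hx6 : x ≤ 6
    · exact Or.inl hx6
    · right
      push_neg at hx6
      have h66 : x - 6 ≤ Real.sqrt ((4 * (x - 1) ^ 2 + (q * x) ^ 2) / (x - 1) ^ 2) := by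
        linarith
      have h66' := (Real.le_sqrt (by linarith) (by positivity)).mp h66
      have hpoly2 : (x - 6) ^ 2 * (x - 1) ^ 2 ≤ 4 * (x - 1) ^ 2 + (q * x) ^ 2 :=
        (le_div_iff₀ hpos).mp h66'
      nlinarith [hpoly2]
  · rintro ⟨hx1, hA, hB⟩
    have hx1' : (0 : ℝ) < x - 1 := by linarith
    have hx4 : 4 < x := by nlinarith [hA, sq_nonneg (x - 1), hq1, hx1]
    have hrw : 4 + (q * x / (x - 1)) ^ 2 = (4 * (x - 1) ^ 2 + (q * x) ^ 2) / (x - 1) ^ 2 := by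
      field_simp
    have hpos : (0 : ℝ) < (x - 1) ^ 2 := by positivity
    have h2 : Real.sqrt (4 + (q * x / (x - 1)) ^ 2) ≤ x - 2 := by
      rw [hrw]
      refine Real.sqrt_le_iff.mpr ⟨by linarith, ?_⟩
      rw [div_le_iff₀ hpos]
      nlinarith [mul_le_mul_of_nonneg_right hA (le_of_lt (show (0:ℝ) < x by linarith))]
    refine ⟨hx1, by linarith, ?_⟩
    by_cases hx6 : x ≤ 6
    · have := Real.sqrt_nonneg (4 + (q * x / (x - 1)) ^ 2)
      linarith
    · push_neg at hx6
      rcases hB with hB | hB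
      · linarith
      · have h66 : x - 6 ≤ Real.sqrt (4 + (q * x / (x - 1)) ^ 2) := by
          rw [hrw]
          refine (Real.le_sqrt (by linarith) (by positivity)).mpr ?_
          rw [le_div_iff₀ hpos]
          nlinarith [hB]
        linarith

lemma psi_mono {x y : ℝ} (hx : 4 ≤ x) (hxy : x ≤ y) :
    (x - 4) * (x - 1) ^ 2 * y ≤ (y - 4) * (y - 1) ^ 2 * x := by
  have hxy1 : (0 : ℝ) ≤ x * y - 1 := by nlinarith
  have hB : (x - 1) ^ 2 * y ≤ (y - 1) ^ 2 * x := by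
    nlinarith [mul_nonneg (sub_nonneg.2 hxy) hxy1]
  have h := mul_le_mul (show x - 4 ≤ y - 4 by linarith) hB
    (mul_nonneg (sq_nonneg _) (by linarith)) (by linarith)
  nlinarith [h]

lemma phi_mono {x y : ℝ} (hx : 8 ≤ x) (hxy : x ≤ y) :
    (x - 4) * (x - 8) * (x - 1) ^ 2 * y ^ 2 ≤ (y - 4) * (y - 8) * (y - 1) ^ 2 * x ^ 2 := by
  have hA : (x - 4) * (x - 8) ≤ (y - 4) * (y - 8) := by
    nlinarith [mul_nonneg (sub_nonneg.2 hxy) (show (0:ℝ) ≤ x + y - 12 by linarith)]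
  have hB0 : (x - 1) * y ≤ (y - 1) * x := by nlinarith
  have hB : (x - 1) ^ 2 * y ^ 2 ≤ (y - 1) ^ 2 * x ^ 2 := by
    nlinarith [mul_nonneg (sub_nonneg.2 hB0)
      (show (0:ℝ) ≤ (y - 1) * x + (x - 1) * y by nlinarith)]
  have h := mul_le_mul hA hB (by positivity)
    (mul_nonneg (by linarith) (by linarith))
  nlinarith [h]

lemma interpA {q x a : ℝ} (ha4 : 4 < a)
    (hgAa : q ^ 2 * a ≤ (a - 4) * (a - 1) ^ 2) (hax : a ≤ x) :
    q ^ 2 * x ≤ (x - 4) * (x - 1) ^ 2 := by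
  have hmono := psi_mono (x := a) (y := x) (by linarith) hax
  have h1' := mul_le_mul_of_nonneg_right hgAa (show (0:ℝ) ≤ x by linarith)
  nlinarith [hmono, h1', ha4]

lemma interpB {q x a b : ℝ} (ha4 : 4 < a)
    (hgBb : (b - 4) * (b - 8) * (b - 1) ^ 2 ≤ q ^ 2 * b ^ 2)
    (hax : a ≤ x) (hxb : x ≤ b) (hx6 : 6 < x) :
    (x - 4) * (x - 8) * (x - 1) ^ 2 ≤ q ^ 2 * x ^ 2 := by
  by_cases hx8 : x ≤ 8
  · have h48 : (x - 4) * (x - 8) ≤ 0 :=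
      mul_nonpos_of_nonneg_of_nonpos (by linarith) (by linarith)
    nlinarith [mul_nonpos_of_nonpos_of_nonneg h48 (sq_nonneg (x - 1)), sq_nonneg (q * x)]
  · push_neg at hx8
    have hmono := phi_mono (x := x) (y := b) (by linarith) hxb
    have h1' := mul_le_mul_of_nonneg_right hgBb (sq_nonneg x)
    nlinarith [hmono, h1', sq_nonneg b, hx8]

lemma len4 {q a b : ℝ} (hq1 : 1 ≤ q) (ha4 : 4 < a)
    (hgAa : q ^ 2 * a ≤ (a - 4) * (a - 1) ^ 2)
    (hgBb : (b - 4) * (b - 8) * (b - 1) ^ 2 ≤ q ^ 2 * b ^ 2)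
    (hab : a + 4 ≤ b) : False := by
  have h1 : q ^ 2 * a * (a * (a + 3) ^ 2) ≤ (a - 4) * (a - 1) ^ 2 * (a * (a + 3) ^ 2) :=
    mul_le_mul_of_nonneg_right hgAa (mul_nonneg (by linarith) (sq_nonneg _))
  have hsq : (a + 4) ^ 2 * (a - 1) ^ 2 < a ^ 2 * (a + 3) ^ 2 := by nlinarith [ha4]
  have h2 : q ^ 2 * ((a + 4) ^ 2 * (a - 1) ^ 2) < q ^ 2 * (a ^ 2 * (a + 3) ^ 2) := by
    have hq2 : (0:ℝ) < q ^ 2 := by nlinarith [hq1]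
    exact (mul_lt_mul_iff_right₀ hq2).mpr hsq
  have hkey : q ^ 2 * (a + 4) ^ 2 * (a - 1) ^ 2 < a * (a - 4) * (a + 3) ^ 2 * (a - 1) ^ 2 := by
    nlinarith [h1, h2]
  have hkeydiv : q ^ 2 * (a + 4) ^ 2 < a * (a - 4) * (a + 3) ^ 2 := by
    nlinarith [hkey, pow_pos (show (0:ℝ) < a - 1 by linarith) 2]
  have hmono := phi_mono (x := a + 4) (y := b) (by linarith) (by linarith)
  have h3 := mul_le_mul_of_nonneg_right hgBb (sq_nonneg (a + 4))
  have h4 := mul_lt_mul_of_pos_right hkeydiv (pow_pos (show (0:ℝ) < b by linarith) 2)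
  nlinarith [hmono, h3, h4]

lemma Sset_struct (p : ℕ) (hp : 1 ≤ p) :
    Sset p = Set.Icc (sInf (Sset p)) (sSup (Sset p)) ∧
    sInf (Sset p) ≤ sSup (Sset p) ∧
    (p : ℝ) + 3 ≤ sInf (Sset p) ∧ sSup (Sset p) ≤ (p : ℝ) + 8 ∧
    sSup (Sset p) - sInf (Sset p) < 4 := by
  have hq1 : (1 : ℝ) ≤ (p : ℝ) := by exact_mod_cast hp
  set q : ℝ := (p : ℝ) with hqdef
  have hmem := mem_Sset_iff p hp
  have hx4mem : ∀ x ∈ Sset p, 4 < x := by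
    intro x hx
    obtain ⟨h1, h2, _⟩ := (hmem x).mp hx
    nlinarith [h2, sq_nonneg (x - 1), hq1, h1]
  have hlow : ∀ x ∈ Sset p, q + 3 ≤ x := by
    intro x hx
    obtain ⟨h1, h2, _⟩ := (hmem x).mp hx
    by_contra h
    push_neg at h
    have hx4 : 4 < x := hx4mem x hx
    have hmono := psi_mono (x := x) (y := q + 3) (by linarith) (by linarith)
    have h1' := mul_le_mul_of_nonneg_right h2 (show (0:ℝ) ≤ q + 3 by linarith)
    nlinarith [hmono, h1', hx4, hq1]
  have hupp : ∀ x ∈ Sset p, x ≤ q + 8 := by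
    intro x hx
    obtain ⟨h1, _, hB⟩ := (hmem x).mp hx
    by_contra h
    push_neg at h
    have hx8 : (8 : ℝ) < x := by linarith
    rcases hB with hB | hB
    · linarith
    · have hmono := phi_mono (x := q + 8) (y := x) (by linarith) (by linarith)
      have h1' := mul_le_mul_of_nonneg_right hB (sq_nonneg (q + 8))
      have hkey : (0:ℝ) < q * (2 * q ^ 2 + 41 * q + 196) := by nlinarith
      nlinarith [hmono, h1', mul_pos hkey (show (0:ℝ) < x ^ 2 by positivity)]
  have hmem5 : q + 5 ∈ Sset p := by
    refine (hmem _).mpr ⟨by linarith, by nlinarith, Or.inr (by nlinarith)⟩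
  have hne : (Sset p).Nonempty := ⟨q + 5, hmem5⟩
  have hbb : BddBelow (Sset p) := ⟨q + 3, hlow⟩
  have hba : BddAbove (Sset p) := ⟨q + 8, hupp⟩
  have hSeq : Sset p = {x : ℝ | (q + 3 ≤ x ∧ x ≤ q + 8) ∧
      (0 ≤ (x - 4) * (x - 1) ^ 2 - q ^ 2 * x ∧
        (x ≤ 6 ∨ (x - 4) * (x - 8) * (x - 1) ^ 2 - q ^ 2 * x ^ 2 ≤ 0))} := by
    ext x
    constructor
    · intro hx
      obtain ⟨h1, h2, hB⟩ := (hmem x).mp hx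
      refine ⟨⟨hlow x hx, hupp x hx⟩, by linarith, ?_⟩
      rcases hB with hB | hB
      · exact Or.inl hB
      · exact Or.inr (by linarith)
    · rintro ⟨⟨hl, hu⟩, h2, hB⟩
      refine (hmem x).mpr ⟨by linarith, by linarith, ?_⟩
      rcases hB with hB | hB
      · exact Or.inl hB
      · exact Or.inr (by linarith)
  have hclosed : IsClosed (Sset p) := by
    rw [hSeq]
    have heq2 : {x : ℝ | (q + 3 ≤ x ∧ x ≤ q + 8) ∧
        (0 ≤ (x - 4) * (x - 1) ^ 2 - q ^ 2 * x ∧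
          (x ≤ 6 ∨ (x - 4) * (x - 8) * (x - 1) ^ 2 - q ^ 2 * x ^ 2 ≤ 0))} =
        (Set.Icc (q + 3) (q + 8)) ∩
          ({x : ℝ | 0 ≤ (x - 4) * (x - 1) ^ 2 - q ^ 2 * x} ∩
            ({x : ℝ | x ≤ 6} ∪ {x : ℝ | (x - 4) * (x - 8) * (x - 1) ^ 2 - q ^ 2 * x ^ 2 ≤ 0})) := by
      ext x
      simp only [Set.mem_setOf_eq, Set.mem_inter_iff, Set.mem_Icc, Set.mem_union]
    rw [heq2]
    refine isClosed_Icc.inter (IsClosed.inter ?_ (IsClosed.union ?_ ?_))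
    · exact isClosed_le continuous_const (by fun_prop)
    · exact isClosed_le continuous_id continuous_const
    · exact isClosed_le (by fun_prop) continuous_const
  have hainS : sInf (Sset p) ∈ Sset p := hclosed.csInf_mem hne hbb
  have hbinS : sSup (Sset p) ∈ Sset p := hclosed.csSup_mem hne hba
  obtain ⟨a, ha⟩ : ∃ a, sInf (Sset p) = a := ⟨_, rfl⟩
  obtain ⟨b, hb⟩ : ∃ b, sSup (Sset p) = b := ⟨_, rfl⟩
  rw [ha] at hainS
  rw [hb] at hbinS
  rw [ha, hb]
  have hab : a ≤ b := by
    rw [← ha, ← hb]; exact csInf_le_csSup hne hbb hba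
  have ha4 : 4 < a := hx4mem a hainS
  obtain ⟨_, hgAa, _⟩ := (hmem a).mp hainS
  obtain ⟨_, _, hBb⟩ := (hmem b).mp hbinS
  have hIcc : Sset p = Set.Icc a b := by
    ext x
    constructor
    · intro hx
      exact ⟨ha ▸ csInf_le hbb hx, hb ▸ le_csSup hba hx⟩
    · rintro ⟨hax, hxb⟩
      refine (hmem x).mpr ⟨by linarith, interpA ha4 hgAa hax, ?_⟩
      by_cases hx6 : x ≤ 6
      · exact Or.inl hx6
      · push_neg at hx6
        have hgBb : (b - 4) * (b - 8) * (b - 1) ^ 2 ≤ q ^ 2 * b ^ 2 := by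
          rcases hBb with h | h
          · linarith
          · exact h
        exact Or.inr (interpB ha4 hgBb hax hxb hx6)
  have hlen : b - a < 4 := by
    by_contra h
    push_neg at h
    have hgBb : (b - 4) * (b - 8) * (b - 1) ^ 2 ≤ q ^ 2 * b ^ 2 := by
      rcases hBb with h' | h'
      · linarith
      · exact h'
    exact len4 hq1 ha4 hgAa hgBb (by linarith)
  exact ⟨hIcc, hab, hlow a hainS, hupp b hbinS, hlen⟩

end GuidedBand

set_option maxHeartbeats 1000000 in
/-- For `p ≥ 1` let `Q(λ) = pλ/(λ−1)` for `λ > 1` and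
`S_p = {λ > 1 : 2 ≤ λ − √(4 + Q(λ)²) ≤ 6}`.  Then `S_p` is a closed interval
`[a, b]` with `b − a < 4` and `[a, b] ⊆ [p+3, p+8]`; moreover the length of `S_p`
tends to `4` as `p → ∞`. -/
theorem guided_band_star_guide :
    (∀ p : ℕ, 1 ≤ p → ∃ a b : ℝ, a ≤ b ∧
      {x : ℝ | 1 < x ∧ 2 ≤ x - Real.sqrt (4 + ((p : ℝ) * x / (x - 1)) ^ 2) ∧
        x - Real.sqrt (4 + ((p : ℝ) * x / (x - 1)) ^ 2) ≤ 6} = Set.Icc a b ∧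
      b - a < 4 ∧ Set.Icc a b ⊆ Set.Icc ((p : ℝ) + 3) ((p : ℝ) + 8)) ∧
    Tendsto (fun p : ℕ =>
      sSup {x : ℝ | 1 < x ∧ 2 ≤ x - Real.sqrt (4 + ((p : ℝ) * x / (x - 1)) ^ 2) ∧
          x - Real.sqrt (4 + ((p : ℝ) * x / (x - 1)) ^ 2) ≤ 6}
        - sInf {x : ℝ | 1 < x ∧ 2 ≤ x - Real.sqrt (4 + ((p : ℝ) * x / (x - 1)) ^ 2) ∧
          x - Real.sqrt (4 + ((p : ℝ) * x / (x - 1)) ^ 2) ≤ 6})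
      atTop (nhds 4) := by
  constructor
  · intro p hp
    obtain ⟨hIcc, hab, hlo, hhi, hlen⟩ := Sset_struct p hp
    exact ⟨sInf (Sset p), sSup (Sset p), hab, hIcc, hlen, Set.Icc_subset_Icc hlo hhi⟩
  · show Tendsto (fun p : ℕ => sSup (Sset p) - sInf (Sset p)) atTop (nhds 4)
    have hupper : ∀ᶠ p : ℕ in atTop, sSup (Sset p) - sInf (Sset p) ≤ 4 := by
      filter_upwards [eventually_ge_atTop 1] with p hp
      exact le_of_lt (Sset_struct p hp).2.2.2.2
    have hlower : ∀ᶠ p : ℕ in atTop, 4 - 13 / (p : ℝ) ≤ sSup (Sset p) - sInf (Sset p) := by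
      filter_upwards [eventually_ge_atTop 100] with p hp
      have hp1 : 1 ≤ p := le_trans (by norm_num) hp
      have hq : (100 : ℝ) ≤ (p : ℝ) := by exact_mod_cast hp
      obtain ⟨q, hqdef⟩ : ∃ q : ℝ, (p : ℝ) = q := ⟨_, rfl⟩
      rw [hqdef] at hq
      have hq0 : (0 : ℝ) < q := by linarith
      obtain ⟨hIcc, hab, hlo, hhi, hlen⟩ := Sset_struct p hp1
      rw [hqdef] at hlo hhi
      have hqpow : ∀ n : ℕ, 100 * q ^ n ≤ q ^ (n + 1) := by
        intro n
        have h := mul_le_mul_of_nonneg_left hq (pow_nonneg hq0.le n)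
        calc 100 * q ^ n = q ^ n * 100 := by ring
          _ ≤ q ^ n * q := h
          _ = q ^ (n + 1) := (pow_succ q n).symm
      have hp12 : 100 * q ≤ q ^ 2 := by simpa using hqpow 1
      have hp23 : 100 * q ^ 2 ≤ q ^ 3 := hqpow 2
      have hp34 : 100 * q ^ 3 ≤ q ^ 4 := hqpow 3
      have hp45 : 100 * q ^ 4 ≤ q ^ 5 := hqpow 4
      have hp56 : 100 * q ^ 5 ≤ q ^ 6 := hqpow 5
      have hp67 : 100 * q ^ 6 ≤ q ^ 7 := hqpow 6
      have hnn : ∀ n : ℕ, 0 ≤ q ^ n := fun n => pow_nonneg hq0.le n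
      obtain ⟨x1, hx1def⟩ : ∃ x : ℝ, q + 3 + 3 / q = x := ⟨_, rfl⟩
      obtain ⟨x2, hx2def⟩ : ∃ x : ℝ, q + 7 - 10 / q = x := ⟨_, rfl⟩
      have hx1mem : x1 ∈ Sset p := by
        refine (mem_Sset_iff p hp1 x1).mpr ?_
        rw [hqdef]
        refine ⟨?_, ?_, Or.inr ?_⟩
        · have h3q : 0 < 3 / q := by positivity
          linarith [hx1def]
        · have key1 : ((x1 - 4) * (x1 - 1) ^ 2 - q ^ 2 * x1) * q ^ 3 =
              6 * q ^ 4 + 14 * q ^ 3 + 27 * q ^ 2 + 27 * q + 27 := by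
            rw [← hx1def]; field_simp
            ring
          have hpos1 : (0:ℝ) < 6 * q ^ 4 + 14 * q ^ 3 + 27 * q ^ 2 + 27 * q + 27 := by
            have := hnn 4; have := hnn 3; have := hnn 2
            nlinarith [hq0]
          nlinarith [key1, pow_pos hq0 3, hpos1]
        · have key2 : ((x1 - 4) * (x1 - 8) * (x1 - 1) ^ 2 - q ^ 2 * x1 ^ 2) * q ^ 4 =
              -(8 * q ^ 7 + 18 * q ^ 6 + 40 * q ^ 5 + 25 * q ^ 4 + 66 * q ^ 3 +
                27 * q ^ 2 + 54 * q - 81) := by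
            rw [← hx1def]; field_simp
            ring
          have hneg : (0:ℝ) < 8 * q ^ 7 + 18 * q ^ 6 + 40 * q ^ 5 + 25 * q ^ 4 + 66 * q ^ 3 +
              27 * q ^ 2 + 54 * q - 81 := by
            linarith [hnn 7, hnn 6, hnn 5, hnn 4, hnn 3, hnn 2, hq]
          nlinarith [key2, pow_pos hq0 4, hneg]
      have hx2mem : x2 ∈ Sset p := by
        refine (mem_Sset_iff p hp1 x2).mpr ?_
        rw [hqdef]
        refine ⟨?_, ?_, Or.inr ?_⟩
        · have h10 : 10 / q ≤ 1 := by rw [div_le_one hq0]; linarith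
          linarith [hx2def]
        · have key3 : ((x2 - 4) * (x2 - 1) ^ 2 - q ^ 2 * x2) * q ^ 3 =
              8 * q ^ 5 + 52 * q ^ 4 - 192 * q ^ 3 - 420 * q ^ 2 + 1500 * q - 1000 := by
            rw [← hx2def]; field_simp
            ring
          have hpos3 : (0:ℝ) < 8 * q ^ 5 + 52 * q ^ 4 - 192 * q ^ 3 - 420 * q ^ 2 +
              1500 * q - 1000 := by
            linarith [hnn 5, hnn 4, hnn 3, hnn 2, hp34, hp23, hp12, hq]
          nlinarith [key3, pow_pos hq0 3, hpos3]
        · have key4 : ((x2 - 4) * (x2 - 8) * (x2 - 1) ^ 2 - q ^ 2 * x2 ^ 2) * q ^ 4 =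
              -(12 * q ^ 6 + 244 * q ^ 5 + 748 * q ^ 4 - 3840 * q ^ 3 - 1700 * q ^ 2 +
                14000 * q - 10000) := by
            rw [← hx2def]; field_simp
            ring
          have hpos4 : (0:ℝ) < 12 * q ^ 6 + 244 * q ^ 5 + 748 * q ^ 4 - 3840 * q ^ 3 -
              1700 * q ^ 2 + 14000 * q - 10000 := by
            linarith [hnn 6, hnn 5, hnn 4, hnn 3, hnn 2, hp34, hp23, hp12, hq]
          nlinarith [key4, pow_pos hq0 4, hpos4]
      rw [hIcc] at hx1mem hx2mem
      have h1 : sInf (Sset p) ≤ x1 := hx1mem.1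
      have h2 : x2 ≤ sSup (Sset p) := hx2mem.2
      have hdiff : x2 - x1 = 4 - 13 / q := by
        rw [← hx1def, ← hx2def]
        ring
      have h13 : 0 ≤ 13 / q := by positivity
      have h13' : (13 : ℝ) / (p : ℝ) = 13 / q := by rw [hqdef]
      rw [h13']
      linarith [h1, h2, hdiff]
    have hg : Tendsto (fun p : ℕ => 4 - 13 / (p : ℝ)) atTop (nhds 4) := by
      have := tendsto_const_div_atTop_nhds_zero_nat (13 : ℝ)
      simpa using tendsto_const_nhds.sub this
    exact tendsto_of_tendsto_of_tendsto_of_le_of_le' hg tendsto_const_nhds hlower hupper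
end

section
/- Let s ≥ 1 be a natural number, let V = (ℤ × ℤ) ⊕ (ℤ × Fin 2), and let Δ be the bounded self-adjoint operator on ℓ²(V) (the Laplacian of the square lattice with two s-fold multiple pendant edges attached at each vertex of ℤ × {0}) defined by: for u = inl (m₁, m₂) with m₂ ≠ 0, (Δ F)(u) = 4 F(inl(m₁,m₂)) − F(inl(m₁+1,m₂)) − F(inl(m₁−1,m₂)) − F(inl(m₁,m₂+1)) − F(inl(m₁,m₂−1)); for u = inl (m₁, 0), (Δ F)(u) = (4 + 2s) F(inl(m₁,0)) − F(inl(m₁+1,0)) − F(inl(m₁−1,0)) − F(inl(m₁,1)) − F(inl(m₁,−1)) − s·F(inr(m₁,0)) − s·F(inr(m₁,1)); and for u = inr (n, j), (Δ F)(u) = s·F(inr(n,j)) − s·F(inl(n,0)). Then s is an eigenvalue of Δ of infinite multiplicity, i.e., the eigenspace {F ∈ ℓ²(V) : Δ F = s F} is an infinite-dimensional subspace. -/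
open Sum

noncomputable section FlatBandAux

abbrev FBV := (ℤ × ℤ) ⊕ (ℤ × Fin 2)
abbrev FBH := lp (fun _ : FBV => ℂ) 2

/-- Evaluation at a vertex, as a linear map. -/
def fbEval (v : FBV) : FBH →ₗ[ℂ] ℂ where
  toFun F := F v
  map_add' F G := congrFun (lp.coeFn_add F G) v
  map_smul' c F := congrFun (lp.coeFn_smul c F) v

/-- The pendant eigenfunctions. -/
def fbE (n : ℤ) : FBH :=
  lp.single 2 (inr (n, (0 : Fin 2))) (1 : ℂ) - lp.single 2 (inr (n, (1 : Fin 2))) (1 : ℂ)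

lemma fbE_apply (n : ℤ) (v : FBV) :
    fbE n v = (if v = inr (n, (0 : Fin 2)) then 1 else 0)
      - (if v = inr (n, (1 : Fin 2)) then 1 else 0) := by
  have := congrFun (lp.coeFn_sub (E := fun _ : FBV => ℂ) (p := 2)
    (lp.single 2 (inr (n, (0 : Fin 2))) (1 : ℂ))
    (lp.single 2 (inr (n, (1 : Fin 2))) (1 : ℂ))) v
  rw [fbE, this, Pi.sub_apply, lp.single_apply, lp.single_apply, Pi.single_apply, Pi.single_apply]

lemma fbE_linearIndependent : LinearIndependent ℂ fbE := by
  rw [linearIndependent_iff']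
  intro t g hg i hi
  have := congrArg (fbEval (inr (i, (0 : Fin 2)))) hg
  rw [map_sum, map_zero] at this
  simp only [map_smul, smul_eq_mul] at this
  rw [Finset.sum_eq_single i] at this
  · simpa [fbEval, fbE_apply] using this
  · intro b _ hb
    simp [fbEval, fbE_apply, Ne.symm hb]
  · exact fun h => absurd hi h

end FlatBandAux

/-- Let `s ≥ 1`, `V = (ℤ × ℤ) ⊕ (ℤ × Fin 2)`, and let `Δ` be the Laplacian of the
square lattice with two `s`-fold multiple pendant edges attached at each vertex of
`ℤ × {0}` (defined pointwise as in the hypotheses).  Then `s` is an eigenvalue of `Δ`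
of infinite multiplicity: the eigenspace `{F : Δ F = s F}` is infinite-dimensional. -/
theorem flat_band_double_mandarin_guide
    (s : ℕ) (hs : 1 ≤ s)
    (Δ : lp (fun _ : (ℤ × ℤ) ⊕ (ℤ × Fin 2) => ℂ) 2 →L[ℂ]
         lp (fun _ : (ℤ × ℤ) ⊕ (ℤ × Fin 2) => ℂ) 2)
    (hsa : IsSelfAdjoint Δ)
    (h1 : ∀ F : lp (fun _ : (ℤ × ℤ) ⊕ (ℤ × Fin 2) => ℂ) 2, ∀ m₁ m₂ : ℤ, m₂ ≠ 0 →
      (Δ F) (inl (m₁, m₂)) = 4 * F (inl (m₁, m₂)) - F (inl (m₁ + 1, m₂))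
        - F (inl (m₁ - 1, m₂)) - F (inl (m₁, m₂ + 1)) - F (inl (m₁, m₂ - 1)))
    (h2 : ∀ F : lp (fun _ : (ℤ × ℤ) ⊕ (ℤ × Fin 2) => ℂ) 2, ∀ m₁ : ℤ,
      (Δ F) (inl (m₁, 0)) = (4 + 2 * (s : ℂ)) * F (inl (m₁, 0)) - F (inl (m₁ + 1, 0))
        - F (inl (m₁ - 1, 0)) - F (inl (m₁, 1)) - F (inl (m₁, -1))
        - (s : ℂ) * F (inr (m₁, 0)) - (s : ℂ) * F (inr (m₁, 1)))
    (h3 : ∀ F : lp (fun _ : (ℤ × ℤ) ⊕ (ℤ × Fin 2) => ℂ) 2, ∀ n : ℤ, ∀ j : Fin 2,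
      (Δ F) (inr (n, j)) = (s : ℂ) * F (inr (n, j)) - (s : ℂ) * F (inl (n, 0))) :
    ¬ FiniteDimensional ℂ
      ↥(LinearMap.ker (Δ - (s : ℂ) • (1 : lp (fun _ : (ℤ × ℤ) ⊕ (ℤ × Fin 2) => ℂ) 2 →L[ℂ]
          lp (fun _ : (ℤ × ℤ) ⊕ (ℤ × Fin 2) => ℂ) 2)).toLinearMap) := by
  intro hfd
  -- each `fbE n` lies in the kernel
  have hmem : ∀ n : ℤ, fbE n ∈ LinearMap.ker (Δ - (s : ℂ) • (1 : FBH →L[ℂ] FBH)).toLinearMap := by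
    intro n
    rw [LinearMap.mem_ker]
    apply lp.ext
    funext v
    have hv : ((Δ - (s : ℂ) • (1 : FBH →L[ℂ] FBH)) (fbE n)) v
        = (Δ (fbE n)) v - (s : ℂ) * fbE n v := by
      rw [ContinuousLinearMap.sub_apply, ContinuousLinearMap.smul_apply,
        ContinuousLinearMap.one_apply]
      rw [congrFun (lp.coeFn_sub (Δ (fbE n)) ((s : ℂ) • fbE n)) v, Pi.sub_apply,
        congrFun (lp.coeFn_smul (s : ℂ) (fbE n)) v, Pi.smul_apply, smul_eq_mul]
    rw [ContinuousLinearMap.coe_coe, hv]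
    show _ = (0 : FBH) v
    rw [lp.coeFn_zero, Pi.zero_apply]
    rcases v with ⟨m₁, m₂⟩ | ⟨k, j⟩
    · by_cases hm : m₂ = 0
      · subst hm
        rw [h2]
        simp [fbE_apply]
      · rw [h1 _ _ _ hm]
        simp [fbE_apply]
    · rw [h3]
      simp [fbE_apply]
  -- a linearly independent ℤ-indexed family in the kernel
  have hli : LinearIndependent ℂ
      (fun n : ℤ => (⟨fbE n, hmem n⟩ :
        LinearMap.ker (Δ - (s : ℂ) • (1 : FBH →L[ℂ] FBH)).toLinearMap)) := by
    apply LinearIndependent.of_comp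
      (LinearMap.ker (Δ - (s : ℂ) • (1 : FBH →L[ℂ] FBH)).toLinearMap).subtype
    exact fbE_linearIndependent
  have : Finite ℤ := hli.finite_of_isNoetherian
  exact @not_finite ℤ _ this
end

section
/- For every natural number p ≥ 1, the cubic equation λ³ − 6λ² + (9 − p²)·λ − 4 = 0 has exactly one real solution λ in the interval [p + 3, p + 4]; in particular, h(p+3) = −4 < 0 and h(p+4) = 2p² + 9p > 0, where h(λ) = λ³ − 6λ² + (9 − p²)·λ − 4. -/
/-- For every natural `p ≥ 1`, the cubic `h(λ) = λ³ − 6λ² + (9 − p²)λ − 4` has exactly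
one real root in `[p+3, p+4]`; in particular `h(p+3) = −4 < 0` and
`h(p+4) = 2p² + 9p > 0`. -/
theorem cubic_unique_root_star_guide (p : ℕ) (hp : 1 ≤ p) :
    (∃! x : ℝ, x ∈ Set.Icc ((p : ℝ) + 3) ((p : ℝ) + 4) ∧
      x ^ 3 - 6 * x ^ 2 + (9 - (p : ℝ) ^ 2) * x - 4 = 0) ∧
    ((p : ℝ) + 3) ^ 3 - 6 * ((p : ℝ) + 3) ^ 2 + (9 - (p : ℝ) ^ 2) * ((p : ℝ) + 3) - 4
      = -4 ∧ (-4 : ℝ) < 0 ∧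
    ((p : ℝ) + 4) ^ 3 - 6 * ((p : ℝ) + 4) ^ 2 + (9 - (p : ℝ) ^ 2) * ((p : ℝ) + 4) - 4
      = 2 * (p : ℝ) ^ 2 + 9 * (p : ℝ) ∧ 0 < 2 * (p : ℝ) ^ 2 + 9 * (p : ℝ) := by
  have hp1 : (1 : ℝ) ≤ (p : ℝ) := by exact_mod_cast hp
  set f : ℝ → ℝ := fun x => x ^ 3 - 6 * x ^ 2 + (9 - (p : ℝ) ^ 2) * x - 4 with hf
  have hfc : Continuous f := by continuity
  have hderiv : ∀ x : ℝ, HasDerivAt f (3 * x ^ 2 - 12 * x + (9 - (p : ℝ) ^ 2)) x := by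
    intro x
    have h := (((hasDerivAt_pow 3 x).sub ((hasDerivAt_pow 2 x).const_mul 6)).add
      ((hasDerivAt_id x).const_mul (9 - (p : ℝ) ^ 2))).sub_const 4
    exact h.congr_deriv (by norm_num; ring)
  have hmono : StrictMonoOn f (Set.Icc ((p : ℝ) + 3) ((p : ℝ) + 4)) := by
    apply strictMonoOn_of_deriv_pos (convex_Icc _ _) hfc.continuousOn
    intro x hx
    rw [interior_Icc, Set.mem_Ioo] at hx
    rw [(hderiv x).deriv]
    nlinarith [hx.1, hx.2, hp1]
  have hf3 : f ((p : ℝ) + 3) = -4 := by simp only [hf]; ring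
  have hf4 : f ((p : ℝ) + 4) = 2 * (p : ℝ) ^ 2 + 9 * (p : ℝ) := by simp only [hf]; ring
  have hpos : (0 : ℝ) < 2 * (p : ℝ) ^ 2 + 9 * (p : ℝ) := by nlinarith
  refine ⟨?_, by simp only [hf] at hf3 ⊢; linarith, by norm_num, by simp only [hf] at hf4 ⊢; linarith, hpos⟩
  have hle : (p : ℝ) + 3 ≤ (p : ℝ) + 4 := by linarith
  have hiv : (0 : ℝ) ∈ Set.Icc (f ((p : ℝ) + 3)) (f ((p : ℝ) + 4)) := by
    rw [hf3, hf4]; constructor <;> linarith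
  obtain ⟨x, hxmem, hxeq⟩ := intermediate_value_Icc hle hfc.continuousOn hiv
  refine ⟨x, ⟨hxmem, hxeq⟩, ?_⟩
  rintro y ⟨hymem, hyeq⟩
  rcases lt_trichotomy y x with h | h | h
  · have := hmono hymem hxmem h
    rw [hxeq] at this; simp only [hf] at this; rw [hyeq] at this; exact absurd this (lt_irrefl 0)
  · exact h
  · have := hmono hxmem hymem h
    rw [hxeq] at this; simp only [hf] at this; rw [hyeq] at this; exact absurd this (lt_irrefl 0)
end

section
/- For every natural number s ≥ 2, the equation (λ − 4)·(λ − s)² − 4·s²·λ = 0 has exactly one real solution λ in the interval [3s + 1, 3s + 2]; in particular, h(3s+1) = −4s² − 9s − 3 < 0 and h(3s+2) = 4(2s² − s − 2) > 0, where h(λ) = (λ − 4)(λ − s)² − 4s²λ. -/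
lemma cubic_aux (t : ℝ) (ht : 2 ≤ t) :
    ∃! x : ℝ, x ∈ Set.Icc (3 * t + 1) (3 * t + 2) ∧
      (x - 4) * (x - t) ^ 2 - 4 * t ^ 2 * x = 0 := by
  set f : ℝ → ℝ := fun x => (x - 4) * (x - t) ^ 2 - 4 * t ^ 2 * x with hf
  have hab : (3 * t + 1 : ℝ) ≤ 3 * t + 2 := by linarith
  have hderiv : ∀ x : ℝ, HasDerivAt f (1 * (x - t) ^ 2 + (x - 4) * (2 * (x - t)) - 4 * t ^ 2) x := by
    intro x
    have h1 : HasDerivAt (fun x : ℝ => x - 4) 1 x := (hasDerivAt_id x).sub_const 4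
    have h2 : HasDerivAt (fun x : ℝ => (x - t) ^ 2) (2 * (x - t)) x := by
      have := ((hasDerivAt_id x).sub_const t).pow 2
      simpa [Pi.pow_def] using this
    have h3 : HasDerivAt (fun x : ℝ => 4 * t ^ 2 * x) (4 * t ^ 2) x := by
      simpa using (hasDerivAt_id x).const_mul (4 * t ^ 2)
    exact (h1.mul h2).sub h3
  have hcont : ContinuousOn f (Set.Icc (3 * t + 1) (3 * t + 2)) :=
    fun x _ => (hderiv x).continuousAt.continuousWithinAt
  have hmono : StrictMonoOn f (Set.Icc (3 * t + 1) (3 * t + 2)) := by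
    apply strictMonoOn_of_deriv_pos (convex_Icc _ _) hcont
    intro x hx
    rw [interior_Icc] at hx
    rw [(hderiv x).deriv]
    nlinarith [hx.1, hx.2, sq_nonneg (x - t), sq_nonneg t]
  have hfa : f (3 * t + 1) < 0 := by
    simp only [hf]; nlinarith
  have hfb : 0 < f (3 * t + 2) := by
    simp only [hf]; nlinarith
  have h0 : (0 : ℝ) ∈ Set.Icc (f (3 * t + 1)) (f (3 * t + 2)) :=
    ⟨le_of_lt hfa, le_of_lt hfb⟩
  obtain ⟨x, hx, hfx⟩ := intermediate_value_Icc hab hcont h0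
  refine ⟨x, ⟨hx, hfx⟩, ?_⟩
  rintro y ⟨hy, hfy⟩
  have hfy' : f y = 0 := hfy
  exact hmono.injOn hy hx (hfy'.trans hfx.symm)

/-- For every natural `s ≥ 2`, the equation `h(λ) = (λ − 4)(λ − s)² − 4s²λ = 0` has
exactly one real root in `[3s+1, 3s+2]`; in particular
`h(3s+1) = −4s² − 9s − 3 < 0` and `h(3s+2) = 4(2s² − s − 2) > 0`. -/
theorem cubic_unique_root_mandarin_guide (s : ℕ) (hs : 2 ≤ s) :
    (∃! x : ℝ, x ∈ Set.Icc (3 * (s : ℝ) + 1) (3 * (s : ℝ) + 2) ∧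
      (x - 4) * (x - (s : ℝ)) ^ 2 - 4 * (s : ℝ) ^ 2 * x = 0) ∧
    (3 * (s : ℝ) + 1 - 4) * (3 * (s : ℝ) + 1 - (s : ℝ)) ^ 2
        - 4 * (s : ℝ) ^ 2 * (3 * (s : ℝ) + 1)
      = -4 * (s : ℝ) ^ 2 - 9 * (s : ℝ) - 3 ∧
    -4 * (s : ℝ) ^ 2 - 9 * (s : ℝ) - 3 < 0 ∧
    (3 * (s : ℝ) + 2 - 4) * (3 * (s : ℝ) + 2 - (s : ℝ)) ^ 2
        - 4 * (s : ℝ) ^ 2 * (3 * (s : ℝ) + 2)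
      = 4 * (2 * (s : ℝ) ^ 2 - (s : ℝ) - 2) ∧
    0 < 4 * (2 * (s : ℝ) ^ 2 - (s : ℝ) - 2) := by
  have ht : (2 : ℝ) ≤ (s : ℝ) := by exact_mod_cast hs
  refine ⟨cubic_aux (s : ℝ) ht, by ring, by nlinarith, by ring, by nlinarith⟩
end
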